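/- Let f ∈ F_mi(Ξ). (i) If f is componentwise left-continuous, then the induced signed measure satisfies ν_f([x,y)) = Δ_{x,y}[f] for all x ≤ y in Ξ. (ii) If f is componentwise right-continuous, then ν_f((x,y]) = Δ_{x,y}[f] for all x ≤ y in Ξ. (iii) If f is continuous, then ν_f(B) = Δ_{x,y}[f] for every box B = ∏_{i=1}^d B_i with B_i ∈ {[x_i,y_i], (x_i,y_i], [x_i,y_i), (x_i,y_i)} and a ≤ x ≤ y ≤ b. -/

import Mathlib

open MeasureTheory Set Filter Topology
open scoped Classical ENNReal

namespace MIF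

variable {ι : Type*} [Fintype ι] [DecidableEq ι]

/-- Iterated limit of `g`, taking limits in the coordinates listed in `l` (head outermost),
coordinate `i` tending along the filter `F i`. -/
def IterLim (F : ι → Filter ℝ) : List ι → ((ι → ℝ) → ℝ) → ℝ → Prop
  | [], g, L => ∀ t, g t = L
  | i :: rest, g, L => ∃ h : ℝ → ℝ,
      (∀ᶠ s in F i, IterLim F rest (fun t => g (Function.update t i s)) (h s)) ∧
      Filter.Tendsto h (F i) (nhds L)

/-- The iterated limit of `g` over the coordinates in `s` exists, with value `L`,
for every arrangement of the limits. -/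
def HasIterLimOn (F : ι → Filter ℝ) (s : Finset ι) (g : (ι → ℝ) → ℝ) (L : ℝ) : Prop :=
  ∀ l : List ι, l.Nodup → (∀ i, i ∈ l ↔ i ∈ s) → IterLim F l g L

/-- Approach `c` strictly from the left, within `S`. -/
def leftWithin (S : Set ℝ) (c : ℝ) : Filter ℝ := nhdsWithin c (S ∩ Set.Iio c)

/-- Approach `c` strictly from the right, within `S`. -/
def rightWithin (S : Set ℝ) (c : ℝ) : Filter ℝ := nhdsWithin c (S ∩ Set.Ioi c)

/-- The filter expressing `x ↓ inf S` (strictly from above, within `S`). -/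
noncomputable def infApproach (S : Set ℝ) : Filter ℝ :=
  if BddBelow S then nhdsWithin (sInf S) (S ∩ Set.Ioi (sInf S))
  else Filter.atBot ⊓ Filter.principal S

/-- The filter expressing `x ↑ sup S` (strictly from below, within `S`). -/
noncomputable def supApproach (S : Set ℝ) : Filter ℝ :=
  if BddAbove S then nhdsWithin (sSup S) (S ∩ Set.Iio (sSup S))
  else Filter.atTop ⊓ Filter.principal S

/-- The product domain `Ξ = Ξ₁ × ⋯ × Ξ_d`. -/
def piSet (Ξ : ι → Set ℝ) : Set (ι → ℝ) := Set.univ.pi Ξ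

/-- Each `Ξ i` is a nonempty real interval. -/
def IsIntervalFamily (Ξ : ι → Set ℝ) : Prop := ∀ i, (Ξ i).Nonempty ∧ (Ξ i).OrdConnected

/-- Multivariate difference operator of `f` over the coordinates in `I`
(coordinates outside `I` are taken from `x`). -/
def deltaOn (I : Finset ι) (f : (ι → ℝ) → ℝ) (x y : ι → ℝ) : ℝ :=
  ∑ J ∈ I.powerset, (-1 : ℝ) ^ (I.card - J.card) * f fun i => if i ∈ J then y i else x i

/-- The `d`-variate difference operator `Δ_{x,y}[f]`. -/
def delta (f : (ι → ℝ) → ℝ) (x y : ι → ℝ) : ℝ := deltaOn Finset.univ f x y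

/-- The clamped lower corner `a ∨ (x - δ)` (for small `δ`). -/
noncomputable def lowPt (Ξ : ι → Set ℝ) (x δ : ι → ℝ) : ι → ℝ := fun i =>
  if x i - δ i ∈ Ξ i then x i - δ i else x i

/-- The clamped upper corner `b ∧ (y + ε)` (for small `ε`). -/
noncomputable def upPt (Ξ : ι → Set ℝ) (y ε : ι → ℝ) : ι → ℝ := fun i =>
  if y i + ε i ∈ Ξ i then y i + ε i else y i

/-- `D_{x,y}[f] = L`: the iterated limit of `Δ_{a ∨ (x-δ), b ∧ (y+ε)}[f]` as all
`δ_i, ε_i ↓ 0` exists and equals `L`, for every arrangement of the one-sided limits. -/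
def HasDLim (Ξ : ι → Set ℝ) (f : (ι → ℝ) → ℝ) (x y : ι → ℝ) (L : ℝ) : Prop :=
  HasIterLimOn (fun _ : ι × Bool => nhdsWithin 0 (Set.Ioi 0)) Finset.univ
    (fun t => delta f (lowPt Ξ x fun i => t (i, false)) (upPt Ξ y fun i => t (i, true))) L

/-- A (possibly infinite) signed measure, given by its Jordan decomposition: a pair of
mutually singular nonnegative measures, at least one of which is finite. -/
structure SignedM (α : Type*) [MeasurableSpace α] where
  pos : Measure α
  neg : Measure α
  singular : pos.MutuallySingular neg
  finiteOne : pos Set.univ ≠ ⊤ ∨ neg Set.univ ≠ ⊤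

/-- The (extended-real) value `ν(A) = ν⁺(A) - ν⁻(A)` of a signed measure on a set. -/
noncomputable def SignedM.val {α : Type*} [MeasurableSpace α] (ν : SignedM α) (A : Set α) :
    EReal :=
  (ν.pos A : EReal) - (ν.neg A : EReal)

/-- The integral `∫ f dν = ∫ f dν⁺ - ∫ f dν⁻` with respect to a signed measure. -/
noncomputable def SignedM.integral {α : Type*} [MeasurableSpace α] (ν : SignedM α)
    (f : α → ℝ) : ℝ :=
  (∫ a, f a ∂ν.pos) - ∫ a, f a ∂ν.neg

/-- Integrability with respect to a signed measure. -/
def SignedM.IntegrableWrt {α : Type*} [MeasurableSpace α] (ν : SignedM α) (f : α → ℝ) : Prop :=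
  Integrable f ν.pos ∧ Integrable f ν.neg

/-- `f` induces the signed measure `ν` on `Ξ`: `ν` is carried by `Ξ` and
`ν([x,y]) = D_{x,y}[f]` for all `x ≤ y` in `Ξ`. -/
def Induces (Ξ : ι → Set ℝ) (f : (ι → ℝ) → ℝ) (ν : SignedM (ι → ℝ)) : Prop :=
  ν.pos (piSet Ξ)ᶜ = 0 ∧ ν.neg (piSet Ξ)ᶜ = 0 ∧
    ∀ x y : ι → ℝ, x ∈ piSet Ξ → y ∈ piSet Ξ → x ≤ y →
      ∃ r : ℝ, HasDLim Ξ f x y r ∧ ν.val (Set.Icc x y) = (r : EReal)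

/-- `f` is measure inducing on `Ξ`. -/
def MeasureInducing (Ξ : ι → Set ℝ) (f : (ι → ℝ) → ℝ) : Prop :=
  ∃ ν : SignedM (ι → ℝ), Induces Ξ f ν

/-- All componentwise one-sided limits of `f` exist. -/
def HasOneSidedLims (Ξ : ι → Set ℝ) (f : (ι → ℝ) → ℝ) : Prop :=
  ∀ z ∈ piSet Ξ, ∀ i : ι,
    (∃ L, Filter.Tendsto (fun t => f (Function.update z i t)) (leftWithin (Ξ i) (z i))
      (nhds L)) ∧
    (∃ L, Filter.Tendsto (fun t => f (Function.update z i t)) (rightWithin (Ξ i) (z i))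
      (nhds L))

/-- The class `F_mi(Ξ)`. -/
def MemFmi (Ξ : ι → Set ℝ) (f : (ι → ℝ) → ℝ) : Prop :=
  MeasureInducing Ξ f ∧ HasOneSidedLims Ξ f

/-- Continuity condition at the lower boundary: at an attained minimum of `Ξ i`,
the value of `f` equals its right limit in coordinate `i`. -/
def LowerBoundaryCont (Ξ : ι → Set ℝ) (f : (ι → ℝ) → ℝ) : Prop :=
  ∀ z ∈ piSet Ξ, ∀ i : ι, IsLeast (Ξ i) (z i) →
    Filter.Tendsto (fun t => f (Function.update z i t)) (rightWithin (Ξ i) (z i)) (nhds (f z))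

/-- Continuity condition at the upper boundary: at an attained maximum of `Ξ i`,
the value of `f` equals its left limit in coordinate `i`. -/
def UpperBoundaryCont (Ξ : ι → Set ℝ) (f : (ι → ℝ) → ℝ) : Prop :=
  ∀ z ∈ piSet Ξ, ∀ i : ι, IsGreatest (Ξ i) (z i) →
    Filter.Tendsto (fun t => f (Function.update z i t)) (leftWithin (Ξ i) (z i)) (nhds (f z))

/-- One-sided continuity of `f` at the boundary of `Ξ`. -/
def BoundaryCont (Ξ : ι → Set ℝ) (f : (ι → ℝ) → ℝ) : Prop :=
  LowerBoundaryCont Ξ f ∧ UpperBoundaryCont Ξ f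

/-- The class `F_mi^c(Ξ)`. -/
def MemFmiC (Ξ : ι → Set ℝ) (f : (ι → ℝ) → ℝ) : Prop :=
  MemFmi Ξ f ∧ BoundaryCont Ξ f

/-- `f` is componentwise left-continuous on `Ξ`. -/
def LeftCts (Ξ : ι → Set ℝ) (f : (ι → ℝ) → ℝ) : Prop :=
  ∀ z ∈ piSet Ξ, ∀ i : ι,
    Filter.Tendsto (fun t => f (Function.update z i t)) (leftWithin (Ξ i) (z i)) (nhds (f z))

/-- `f` is componentwise right-continuous on `Ξ`. -/
def RightCts (Ξ : ι → Set ℝ) (f : (ι → ℝ) → ℝ) : Prop :=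
  ∀ z ∈ piSet Ξ, ∀ i : ι,
    Filter.Tendsto (fun t => f (Function.update z i t)) (rightWithin (Ξ i) (z i)) (nhds (f z))

/-- The lower `I`-marginal of `f` at `x` equals `L` (iterated limit `x_j ↓ a_j`, `j ∉ I`,
independent of the arrangement). -/
def HasLowerMarginal (Ξ : ι → Set ℝ) (f : (ι → ℝ) → ℝ) (I : Finset ι) (x : ι → ℝ)
    (L : ℝ) : Prop :=
  HasIterLimOn (fun j => infApproach (Ξ j)) Iᶜ (fun t => f fun j => if j ∈ I then x j else t j) L

/-- The upper `I`-marginal of `f` at `x` equals `L`. -/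
def HasUpperMarginal (Ξ : ι → Set ℝ) (f : (ι → ℝ) → ℝ) (I : Finset ι) (x : ι → ℝ)
    (L : ℝ) : Prop :=
  HasIterLimOn (fun j => supApproach (Ξ j)) Iᶜ (fun t => f fun j => if j ∈ I then x j else t j) L

/-- `g` (a function of the full variable, depending only on the coordinates in `I`)
is the lower `I`-marginal of `f`. -/
def IsLowerMarginalFull (Ξ : ι → Set ℝ) (f : (ι → ℝ) → ℝ) (I : Finset ι)
    (g : (ι → ℝ) → ℝ) : Prop :=
  ∀ x ∈ piSet Ξ, HasLowerMarginal Ξ f I x (g x)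

/-- `g` is the upper `I`-marginal of `f` (as a function of the full variable). -/
def IsUpperMarginalFull (Ξ : ι → Set ℝ) (f : (ι → ℝ) → ℝ) (I : Finset ι)
    (g : (ι → ℝ) → ℝ) : Prop :=
  ∀ x ∈ piSet Ξ, HasUpperMarginal Ξ f I x (g x)

/-- The domain `Ξ_I`. -/
def restrSet (Ξ : ι → Set ℝ) (I : Finset ι) : ↥I → Set ℝ := fun j => Ξ (j : ι)

/-- Extend an `I`-indexed point by junk (`0`) outside `I`. -/
def extendI (I : Finset ι) (x : ↥I → ℝ) : ι → ℝ := fun j => if h : j ∈ I then x ⟨j, h⟩ else 0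

/-- Projection onto the coordinates in `I`. -/
def projI (I : Finset ι) : (ι → ℝ) → (↥I → ℝ) := fun z j => z (j : ι)

/-- `g : Ξ_I → ℝ` is the lower `I`-marginal of `f`. -/
def IsLowerMarginalFun (Ξ : ι → Set ℝ) (f : (ι → ℝ) → ℝ) (I : Finset ι)
    (g : (↥I → ℝ) → ℝ) : Prop :=
  ∀ x : ↥I → ℝ, x ∈ piSet (restrSet Ξ I) → HasLowerMarginal Ξ f I (extendI I x) (g x)

/-- `g : Ξ_I → ℝ` is the upper `I`-marginal of `f`. -/
def IsUpperMarginalFun (Ξ : ι → Set ℝ) (f : (ι → ℝ) → ℝ) (I : Finset ι)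
    (g : (↥I → ℝ) → ℝ) : Prop :=
  ∀ x : ↥I → ℝ, x ∈ piSet (restrSet Ξ I) → HasUpperMarginal Ξ f I (extendI I x) (g x)

/-- The class `F_mi^{c,l}(Ξ)`: all lower marginals exist and belong to `F_mi^c`. -/
def MemFmiCl (Ξ : ι → Set ℝ) (f : (ι → ℝ) → ℝ) : Prop :=
  MemFmiC Ξ f ∧ ∀ I : Finset ι, I.Nonempty →
    ∃ g : (↥I → ℝ) → ℝ, IsLowerMarginalFun Ξ f I g ∧ MemFmiC (restrSet Ξ I) g

/-- The class `F_mi^{c,u}(Ξ)`: all upper marginals exist and belong to `F_mi^c`. -/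
def MemFmiCu (Ξ : ι → Set ℝ) (f : (ι → ℝ) → ℝ) : Prop :=
  MemFmiC Ξ f ∧ ∀ I : Finset ι, I.Nonempty →
    ∃ g : (↥I → ℝ) → ℝ, IsUpperMarginalFun Ξ f I g ∧ MemFmiC (restrSet Ξ I) g

/-- `f` is grounded: it satisfies the lower-boundary continuity condition and tends
to `0` as any single coordinate decreases to the lower end of its domain. -/
def Grounded (Ξ : ι → Set ℝ) (f : (ι → ℝ) → ℝ) : Prop :=
  LowerBoundaryCont Ξ f ∧
    ∀ z ∈ piSet Ξ, ∀ j : ι,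
      Filter.Tendsto (fun t => f (Function.update z j t)) (infApproach (Ξ j)) (nhds 0)

/-- `f` is bounded on `Ξ`. -/
def BoundedOn (Ξ : ι → Set ℝ) (f : (ι → ℝ) → ℝ) : Prop :=
  ∃ M : ℝ, ∀ z ∈ piSet Ξ, |f z| ≤ M

/-- The Vitali variation of the `I`-face (anchored at `a`) of `f` over the box `[a,b]`. -/
noncomputable def vitaliVarOn (I : Finset ι) (f : (ι → ℝ) → ℝ) (a b : ι → ℝ) : ℝ≥0∞ :=
  ⨆ (n : ↥I → ℕ) (c : (i : ↥I) → Fin (n i + 1) → ℝ) (_ : ∀ i, Monotone (c i))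
    (_ : ∀ i, c i 0 = a (i : ι)) (_ : ∀ i, c i (Fin.last (n i)) = b (i : ι)),
    ENNReal.ofReal (∑ k : (i : ↥I) → Fin (n i),
      |deltaOn I f (fun j => if h : j ∈ I then c ⟨j, h⟩ ((k ⟨j, h⟩).castSucc) else a j)
        fun j => if h : j ∈ I then c ⟨j, h⟩ ((k ⟨j, h⟩).succ) else a j|)

/-- The Hardy–Krause variation of `f` over `[a,b]`, anchored at `a`. -/
noncomputable def hkVar (f : (ι → ℝ) → ℝ) (a b : ι → ℝ) : ℝ≥0∞ :=
  ∑ I ∈ Finset.univ.powerset.filter Finset.Nonempty, vitaliVarOn I f a b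

/-- `f` is `k`-increasing on `Ξ`. -/
def KIncreasing (Ξ : ι → Set ℝ) (f : (ι → ℝ) → ℝ) (k : ℕ) : Prop :=
  ∀ I : Finset ι, I.card = k → ∀ x y : ι → ℝ, x ∈ piSet Ξ →
    (∀ i ∈ I, y i ∈ Ξ i ∧ x i ≤ y i) → 0 ≤ deltaOn I f x y

/-- `f` is `Δ`-monotone on `Ξ`. -/
def DeltaMonotone (Ξ : ι → Set ℝ) (f : (ι → ℝ) → ℝ) : Prop :=
  ∀ k : ℕ, 1 ≤ k → k ≤ Fintype.card ι → KIncreasing Ξ f k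

/-- `f` is `Δ`-antitone on `Ξ`. -/
def DeltaAntitone (Ξ : ι → Set ℝ) (f : (ι → ℝ) → ℝ) : Prop :=
  ∀ k : ℕ, 1 ≤ k → k ≤ Fintype.card ι → KIncreasing Ξ (fun x => (-1 : ℝ) ^ k * f x) k

/-- `F^f`, built from a given family `m` of lower marginals of `f`. -/
def capF (f : (ι → ℝ) → ℝ) (m : Finset ι → (ι → ℝ) → ℝ) : (ι → ℝ) → ℝ := fun x =>
  f x - ∑ I ∈ Finset.univ.powerset.erase Finset.univ,
    (-1 : ℝ) ^ (Fintype.card ι - I.card - 1) * m I x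

/-- `F^f`, where the lower marginals of `f` are its faces anchored at `a`
(valid for componentwise right-continuous `f` on a domain with least element `a`). -/
def capFface (f : (ι → ℝ) → ℝ) (a : ι → ℝ) : (ι → ℝ) → ℝ := fun x =>
  f x - ∑ I ∈ Finset.univ.powerset.erase Finset.univ,
    (-1 : ℝ) ^ (Fintype.card ι - I.card - 1) * f fun j => if j ∈ I then x j else a j

/-- The survival function of `f`, built from a given family `u` of upper marginals of `f`. -/
def survivalOf (u : Finset ι → (ι → ℝ) → ℝ) : (ι → ℝ) → ℝ := fun x =>
  ∑ I : Finset ι, (-1 : ℝ) ^ I.card * u I x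

/-- The half-open box `[x,y)`. -/
def boxIco (x y : ι → ℝ) : Set (ι → ℝ) := {z | ∀ i, z i ∈ Set.Ico (x i) (y i)}

/-- The half-open box `(x,y]`. -/
def boxIoc (x y : ι → ℝ) : Set (ι → ℝ) := {z | ∀ i, z i ∈ Set.Ioc (x i) (y i)}

/-- The componentwise left-continuous version of `f` takes the value `L` at `z`. -/
def HasLeftVersionAt (Ξ : ι → Set ℝ) (f : (ι → ℝ) → ℝ) (z : ι → ℝ) (L : ℝ) : Prop :=
  HasIterLimOn (fun i => leftWithin (Ξ i) (z i))
    (Finset.univ.filter fun i => (leftWithin (Ξ i) (z i)).NeBot)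
    (fun t => f fun i => if (leftWithin (Ξ i) (z i)).NeBot then t i else z i) L

/-- The componentwise right-continuous version of `f` takes the value `L` at `z`. -/
def HasRightVersionAt (Ξ : ι → Set ℝ) (f : (ι → ℝ) → ℝ) (z : ι → ℝ) (L : ℝ) : Prop :=
  HasIterLimOn (fun i => rightWithin (Ξ i) (z i))
    (Finset.univ.filter fun i => (rightWithin (Ξ i) (z i)).NeBot)
    (fun t => f fun i => if (rightWithin (Ξ i) (z i)).NeBot then t i else z i) L

/-- `fm` is the componentwise left-continuous version `f₋` of `f`. -/
def IsLeftVersion (Ξ : ι → Set ℝ) (f fm : (ι → ℝ) → ℝ) : Prop :=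
  ∀ z ∈ piSet Ξ, HasLeftVersionAt Ξ f z (fm z)

/-- `fp` is the componentwise right-continuous version `f₊` of `f`. -/
def IsRightVersion (Ξ : ι → Set ℝ) (f fp : (ι → ℝ) → ℝ) : Prop :=
  ∀ z ∈ piSet Ξ, HasRightVersionAt Ξ f z (fp z)

/-- A univariate distribution function on the interval `S`. -/
def IsDistFun (S : Set ℝ) (F : ℝ → ℝ) : Prop :=
  (∀ x ∈ S, F x ∈ Set.Icc (0 : ℝ) 1) ∧ MonotoneOn F S ∧
    (∀ c ∈ S, Filter.Tendsto F (rightWithin S c) (nhds (F c))) ∧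
    Filter.Tendsto F (infApproach S) (nhds 0) ∧ Filter.Tendsto F (supApproach S) (nhds 1)

/-- Generalized inverse `F^{[-1]}(t) = inf {x ∈ S : F x ≥ t}`, with `inf ∅ = sup S`. -/
noncomputable def genInv (S : Set ℝ) (F : ℝ → ℝ) (t : ℝ) : ℝ :=
  if {x | x ∈ S ∧ t ≤ F x}.Nonempty then sInf {x | x ∈ S ∧ t ≤ F x} else sSup S

/-- All mixed partial derivatives of `f` in pairwise distinct coordinates from `s` exist
(of every order `≤ s.card`). -/
def MixedPartialsOn (Ξ : ι → Set ℝ) (s : Finset ι) (f : (ι → ℝ) → ℝ) : Prop :=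
  ∀ i ∈ s, ∃ g : (ι → ℝ) → ℝ,
    (∀ z ∈ piSet Ξ, HasDerivWithinAt (fun t => f (Function.update z i t)) (g z) (Ξ i) (z i)) ∧
    MixedPartialsOn Ξ (s.erase i) g
termination_by s.card
decreasing_by exact Finset.card_erase_lt_of_mem (by assumption)

/-- `D` is the iterated partial derivative of `f` in the coordinates listed in `l`. -/
def IsIterDeriv (Ξ : ι → Set ℝ) : List ι → ((ι → ℝ) → ℝ) → ((ι → ℝ) → ℝ) → Prop
  | [], f, D => ∀ z ∈ piSet Ξ, D z = f z
  | i :: rest, f, D => ∃ g : (ι → ℝ) → ℝ,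
      (∀ z ∈ piSet Ξ, HasDerivWithinAt (fun t => f (Function.update z i t)) (g z) (Ξ i) (z i)) ∧
      IsIterDeriv Ξ rest g D

/-- Restriction of `f` to the `I`-face anchored at `0`. -/
def fsub (f : (ι → ℝ) → ℝ) (I : Finset ι) : (↥I → ℝ) → ℝ := fun x => f (extendI I x)

/-- The domain `ℝ₊^d`. -/
def nnRP (ι : Type*) : ι → Set ℝ := fun _ => Set.Ici (0 : ℝ)

/-- The domain `[0,1]^d`. -/
def unitI (ι : Type*) : ι → Set ℝ := fun _ => Set.Icc (0 : ℝ) 1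

/-- The domain `ℝ^d`. -/
def allR (ι : Type*) : ι → Set ℝ := fun _ => Set.univ

end MIF

namespace MIF


section Aux

open Filter

variable {κ : Type*} [DecidableEq κ]

lemma iterLim_congr {F : κ → Filter ℝ} {l : List κ} {g g' : (κ → ℝ) → ℝ} {L : ℝ}
    (hgg : ∀ t, g t = g' t) (h : IterLim F l g L) : IterLim F l g' L := by
  induction l generalizing g g' L with
  | nil => intro t; rw [← hgg t]; exact h t
  | cons i rest ih =>
      obtain ⟨h₀, hev, hto⟩ := h
      exact ⟨h₀, hev.mono fun s hs => ih (fun t => hgg _) hs, hto⟩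

lemma iterLim_unique {F : κ → Filter ℝ} (hF : ∀ i, (F i).NeBot) {l : List κ}
    {g : (κ → ℝ) → ℝ} {L L' : ℝ} (h : IterLim F l g L) (h' : IterLim F l g L') : L = L' := by
  induction l generalizing g L L' with
  | nil => rw [← h (fun _ => 0), ← h' (fun _ => 0)]
  | cons i rest ih =>
      obtain ⟨h₀, hev, hto⟩ := h
      obtain ⟨h₁, hev', hto'⟩ := h'
      haveI := hF i
      exact tendsto_nhds_unique
        (hto.congr' <| (hev.and hev').mono fun s hs => ih hs.1 hs.2) hto'

lemma iterLim_const {F : κ → Filter ℝ} {l : List κ} (c : ℝ) :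
    IterLim F l (fun _ => c) c := by
  induction l with
  | nil => intro t; rfl
  | cons i rest ih =>
      exact ⟨fun _ => c, Filter.Eventually.of_forall fun s => ih, tendsto_const_nhds⟩

lemma iterLim_add {F : κ → Filter ℝ} {l : List κ} {g₁ g₂ : (κ → ℝ) → ℝ} {L₁ L₂ : ℝ}
    (h₁ : IterLim F l g₁ L₁) (h₂ : IterLim F l g₂ L₂) :
    IterLim F l (fun t => g₁ t + g₂ t) (L₁ + L₂) := by
  induction l generalizing g₁ g₂ L₁ L₂ with
  | nil => intro t; show g₁ t + g₂ t = L₁ + L₂; rw [h₁ t, h₂ t]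
  | cons i rest ih =>
      obtain ⟨a, aev, ato⟩ := h₁
      obtain ⟨b, bev, bto⟩ := h₂
      exact ⟨fun s => a s + b s, (aev.and bev).mono fun s hs => ih hs.1 hs.2, ato.add bto⟩

lemma iterLim_const_mul {F : κ → Filter ℝ} {l : List κ} {g : (κ → ℝ) → ℝ} {L : ℝ}
    (c : ℝ) (h : IterLim F l g L) : IterLim F l (fun t => c * g t) (c * L) := by
  induction l generalizing g L with
  | nil => intro t; show c * g t = c * L; rw [h t]
  | cons i rest ih =>
      obtain ⟨a, aev, ato⟩ := h
      exact ⟨fun s => c * a s, aev.mono fun s hs => ih hs, ato.const_mul c⟩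

lemma iterLim_sum {β : Type*} {s : Finset β} {F : κ → Filter ℝ} {l : List κ}
    {g : β → (κ → ℝ) → ℝ} {L : β → ℝ} (h : ∀ b ∈ s, IterLim F l (g b) (L b)) :
    IterLim F l (fun t => ∑ b ∈ s, g b t) (∑ b ∈ s, L b) := by
  classical
  induction s using Finset.induction_on with
  | empty => simpa using iterLim_const (F := F) (l := l) 0
  | @insert b s hb ih =>
      rw [Finset.sum_insert hb]
      refine iterLim_congr (fun t => ?_)
        (iterLim_add (h b (Finset.mem_insert_self b s))
          (ih fun c hc => h c (Finset.mem_insert_of_mem hc)))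
      rw [Finset.sum_insert hb]

lemma iterLim_of_exact {F : κ → Filter ℝ} {l : List κ} (hl : l.Nodup)
    {Φ : (κ → ℝ) → ℝ}
    (hdep : ∀ u u' : κ → ℝ, (∀ j ∈ l, u j = u' j) → Φ u = Φ u')
    (H : ∀ j ∈ l, ∀ u : κ → ℝ,
      Filter.Tendsto (fun s => Φ (Function.update u j s)) (F j)
        (nhds (Φ (Function.update u j 0)))) :
    IterLim F l Φ (Φ (fun _ => 0)) := by
  induction l generalizing Φ with
  | nil => intro t; exact hdep _ _ (by simp)
  | cons j rest ih =>
      obtain ⟨hjr, hrest⟩ := List.nodup_cons.1 hl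
      refine ⟨fun s => Φ (Function.update (fun _ => 0) j s), ?_, ?_⟩
      · refine Filter.Eventually.of_forall fun s => ?_
        have key := ih hrest (Φ := fun u => Φ (Function.update u j s))
          (fun u u' he => hdep _ _ (by
            intro k hk
            rcases List.mem_cons.1 hk with rfl | hk'
            · simp
            · have hkj : k ≠ j := fun h => hjr (h ▸ hk')
              simp [Function.update_of_ne hkj, he k hk']))
          (fun k hk u => by
            have hkj : k ≠ j := fun h => hjr (h ▸ hk)
            have h2 := H k (List.mem_cons_of_mem j hk) (Function.update u j s)
            have e1 : ∀ σ : ℝ, Function.update (Function.update u j s) k σ =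
                Function.update (Function.update u k σ) j s := fun σ =>
              Function.update_comm (Ne.symm hkj) s σ u
            simpa [e1] using h2)
        have e2 : (fun u => Φ (Function.update u j s)) (fun _ => 0) =
            Φ (Function.update (fun _ => 0) j s) := rfl
        exact key
      · have h3 := H j List.mem_cons_self (fun _ => 0)
        have e3 : Function.update (fun _ : κ => (0:ℝ)) j 0 = fun _ => 0 := by
          simpa using Function.update_eq_self j (fun _ : κ => (0:ℝ))
        rwa [e3] at h3

lemma iterLim_peel {F : κ → Filter ℝ} (hF : ∀ i, (F i).NeBot) :
    ∀ (l₁ : List κ) {l₂ : List κ}, (l₁ ++ l₂).Nodup →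
      ∀ {g G : (κ → ℝ) → ℝ},
      (∀ u u', (∀ j ∈ l₁ ++ l₂, u j = u' j) → g u = g u') →
      (∀ u u', (∀ j ∈ l₁, u j = u' j) → G u = G u') →
      (∀ t, IterLim F l₂ (fun u => g (fun j => if j ∈ l₂ then u j else t j)) (G t)) →
      ∀ {L}, IterLim F (l₁ ++ l₂) g L → IterLim F l₁ G L := by
  intro l₁
  induction l₁ with
  | nil =>
      intro l₂ hnd g G hdepg hdepG hEX L h
      intro t
      have h1 : IterLim F l₂ g (G t) := by
        refine iterLim_congr (fun u => ?_) (hEX t)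
        refine hdepg _ _ fun j hj => ?_
        have hj2 : j ∈ l₂ := by simpa using hj
        simp [hj2]
      exact iterLim_unique hF h1 h
  | cons i l₁' ih =>
      intro l₂ hnd g G hdepg hdepG hEX L h
      obtain ⟨h₀, hev, hto⟩ := h
      have hi : i ∉ l₁' ++ l₂ := (List.nodup_cons.1 hnd).1
      refine ⟨h₀, hev.mono fun s hs => ?_, hto⟩
      refine ih (List.nodup_cons.1 hnd).2
        (g := fun t => g (Function.update t i s))
        (G := fun t => G (Function.update t i s)) ?_ ?_ ?_ hs
      · intro u u' he
        apply hdepg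
        intro j hj
        by_cases hji : j = i
        · subst hji; simp
        · have hj3 : j ∈ i :: (l₁' ++ l₂) := by simpa using hj
          have : j ∈ l₁' ++ l₂ := by
            rcases List.mem_cons.1 hj3 with rfl | hj1'
            · exact absurd rfl hji
            · exact hj1'
          simp [Function.update_of_ne hji, he j this]
      · intro u u' he
        apply hdepG
        intro j hj
        by_cases hji : j = i
        · subst hji; simp
        · have hj' : j ∈ l₁' := by
            rcases List.mem_cons.1 hj with rfl | h'
            · exact absurd rfl hji
            · exact h'
          simp [Function.update_of_ne hji, he j hj']
      · intro t
        have h4 := hEX (Function.update t i s)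
        refine iterLim_congr (fun u => ?_) h4
        apply hdepg
        intro j hj
        have hi2 : i ∉ l₂ := fun h => hi (List.mem_append.2 (Or.inr h))
        by_cases hji : j = i
        · subst hji; simp [hi2]
        · by_cases hj2 : j ∈ l₂
          · simp [hj2, Function.update_of_ne hji]
          · simp [hj2, Function.update_of_ne hji]

end Aux

section Aux2

open Filter Finset

variable {ι : Type*} [Fintype ι] [DecidableEq ι]

lemma sum_powerset_neg_one_real {α : Type*} [DecidableEq α] (K : Finset α) :
    ∑ A ∈ K.powerset, (-1:ℝ)^A.card = if K = ∅ then 1 else 0 := by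
  have h := Finset.sum_powerset_neg_one_pow_card (x := K)
  have : ((∑ m ∈ K.powerset, (-1:ℤ)^m.card : ℤ) : ℝ) = ∑ A ∈ K.powerset, (-1:ℝ)^A.card := by
    push_cast
    rfl
  rw [← this, h]
  split <;> simp

lemma neg_one_pow_sub_real {d b : ℕ} (h : b ≤ d) : (-1:ℝ)^(d-b) = (-1)^d * (-1)^b := by
  have h1 : (-1:ℝ)^(d-b) * (-1)^b = (-1)^d := by
    rw [← pow_add, Nat.sub_add_cancel h]
  have h2 : (-1:ℝ)^b * (-1)^b = 1 := by
    rw [← pow_add]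
    exact Even.neg_one_pow ⟨b, rfl⟩
  calc (-1:ℝ)^(d-b) = (-1:ℝ)^(d-b) * ((-1)^b * (-1)^b) := by rw [h2, mul_one]
    _ = ((-1:ℝ)^(d-b) * (-1)^b) * (-1)^b := by ring
    _ = (-1:ℝ)^d * (-1)^b := by rw [h1]

lemma delta_swap (f : (ι → ℝ) → ℝ) (a b : ι → ℝ) :
    delta f b a = (-1:ℝ)^(Finset.univ : Finset ι).card * delta f a b := by
  classical
  unfold delta deltaOn
  rw [Finset.mul_sum]
  refine Finset.sum_nbij' (fun K => Finset.univ \ K) (fun K => Finset.univ \ K) ?_ ?_ ?_ ?_ ?_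
  · intro K _; exact Finset.mem_powerset.2 (Finset.subset_univ _)
  · intro K _; exact Finset.mem_powerset.2 (Finset.subset_univ _)
  · intro K _; simp
  · intro K _; simp
  · intro K hK
    have hsub : K ⊆ Finset.univ := Finset.mem_powerset.1 hK
    have h1 : K.card ≤ (Finset.univ : Finset ι).card := Finset.card_le_card hsub
    have harg : (fun i => if i ∈ K then a i else b i) =
        (fun i => if i ∈ Finset.univ \ K then b i else a i) := by
      funext i
      by_cases hi : i ∈ K <;> simp [hi]
    rw [harg, Finset.card_sdiff_of_subset hsub, Nat.sub_sub_self h1, neg_one_pow_sub_real h1]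
    ring

lemma delta_degenerate (f : (ι → ℝ) → ℝ) {x y : ι → ℝ} {i0 : ι} (h : x i0 = y i0) :
    delta f x y = 0 := by
  classical
  unfold delta deltaOn
  refine Finset.sum_involution
    (fun J _ => if i0 ∈ J then J.erase i0 else insert i0 J) ?_ ?_ ?_ ?_
  · intro J _
    by_cases hi : i0 ∈ J
    · simp only [hi, if_true]
      have harg : (fun i => if i ∈ J then y i else x i) =
          (fun i => if i ∈ J.erase i0 then y i else x i) := by
        funext i
        by_cases hii : i = i0
        · subst hii; simp [hi, h]
        · simp [Finset.mem_erase, hii]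
      have hc : J.card = (J.erase i0).card + 1 := by
        rw [Finset.card_erase_of_mem hi]
        have : 1 ≤ J.card := Finset.card_pos.2 ⟨i0, hi⟩
        omega
      have hle : J.card ≤ (Finset.univ : Finset ι).card := Finset.card_le_card (Finset.subset_univ _)
      rw [← harg, hc]
      have : (Finset.univ : Finset ι).card - (J.erase i0).card = ((Finset.univ : Finset ι).card - ((J.erase i0).card + 1)) + 1 := by
        omega
      rw [this, pow_succ]
      ring
    · simp only [hi, if_false]
      have harg : (fun i => if i ∈ J then y i else x i) =
          (fun i => if i ∈ insert i0 J then y i else x i) := by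
        funext i
        by_cases hii : i = i0
        · subst hii; simp [hi, h]
        · simp [Finset.mem_insert, hii]
      have hc : (insert i0 J).card = J.card + 1 := Finset.card_insert_of_notMem hi
      have hle : (insert i0 J).card ≤ (Finset.univ : Finset ι).card := Finset.card_le_card (Finset.subset_univ _)
      rw [← harg, hc]
      have : (Finset.univ : Finset ι).card - J.card = ((Finset.univ : Finset ι).card - (J.card + 1)) + 1 := by
        omega
      rw [this, pow_succ]
      ring
  · intro J _ _
    by_cases hi : i0 ∈ J
    · simp only [hi, if_true]
      intro hEq
      have : i0 ∈ J.erase i0 := hEq.symm ▸ hi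
      simp at this
    · simp only [hi, if_false]
      intro hEq
      have : i0 ∈ J := by
        rw [← hEq]
        exact Finset.mem_insert_self _ _
      exact hi this
  · intro J _
    exact Finset.mem_powerset.2 (Finset.subset_univ _)
  · intro J _
    by_cases hi : i0 ∈ J
    · simp [hi]
    · simp [hi, Finset.erase_insert hi]

lemma key_alg_left (f : (ι → ℝ) → ℝ) (x y V : ι → ℝ) :
    ∑ J ∈ (Finset.univ : Finset ι).powerset, (-1:ℝ)^J.card *
      delta f (fun i => if i ∈ J then y i else x i) V = delta f x y := by
  classical
  unfold delta deltaOn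
  have step1 : ∀ J ∈ (Finset.univ : Finset ι).powerset,
      (-1:ℝ)^J.card * ∑ K ∈ (Finset.univ : Finset ι).powerset,
        (-1:ℝ)^((Finset.univ : Finset ι).card - K.card) *
          f (fun i => if i ∈ K then V i else if i ∈ J then y i else x i)
      = ∑ K ∈ (Finset.univ : Finset ι).powerset,
        (-1:ℝ)^((Finset.univ : Finset ι).card - K.card) *
          ((-1:ℝ)^J.card * f (fun i => if i ∈ K then V i else if i ∈ J \ K then y i else x i)) := by
    intro J _
    rw [Finset.mul_sum]
    refine Finset.sum_congr rfl fun K _ => ?_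
    have harg : (fun i => if i ∈ K then V i else if i ∈ J then y i else x i) =
        (fun i => if i ∈ K then V i else if i ∈ J \ K then y i else x i) := by
      funext i
      by_cases hiK : i ∈ K
      · simp [hiK]
      · simp [hiK, Finset.mem_sdiff]
    rw [harg]
    ring
  rw [Finset.sum_congr rfl step1, Finset.sum_comm]
  have step2 : ∀ K ∈ (Finset.univ : Finset ι).powerset,
      ∑ J ∈ (Finset.univ : Finset ι).powerset,
        (-1:ℝ)^((Finset.univ : Finset ι).card - K.card) *
          ((-1:ℝ)^J.card * f (fun i => if i ∈ K then V i else if i ∈ J \ K then y i else x i))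
      = (-1:ℝ)^((Finset.univ : Finset ι).card - K.card) * ((if K = ∅ then (1:ℝ) else 0) *
          ∑ B ∈ (Finset.univ \ K).powerset,
            (-1:ℝ)^B.card * f (fun i => if i ∈ K then V i else if i ∈ B then y i else x i)) := by
    intro K _
    rw [← Finset.mul_sum]
    congr 1
    have hre : ∑ J ∈ (Finset.univ : Finset ι).powerset,
        (-1:ℝ)^J.card * f (fun i => if i ∈ K then V i else if i ∈ J \ K then y i else x i)
        = ∑ p ∈ K.powerset ×ˢ (Finset.univ \ K).powerset,
            (-1:ℝ)^p.1.card * ((-1:ℝ)^p.2.card *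
              f (fun i => if i ∈ K then V i else if i ∈ p.2 then y i else x i)) := by
      refine Finset.sum_nbij' (fun J => (J ∩ K, J \ K)) (fun p => p.1 ∪ p.2) ?_ ?_ ?_ ?_ ?_
      · intro J _
        refine Finset.mem_product.2 ⟨Finset.mem_powerset.2 Finset.inter_subset_right, ?_⟩
        exact Finset.mem_powerset.2 (Finset.sdiff_subset_sdiff (Finset.subset_univ _) le_rfl)
      · intro p _
        exact Finset.mem_powerset.2 (Finset.subset_univ _)
      · intro J _
        ext i
        simp only [Finset.mem_union, Finset.mem_inter, Finset.mem_sdiff]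
        tauto
      · intro p hp
        obtain ⟨h1, h2⟩ := Finset.mem_product.1 hp
        have hA : p.1 ⊆ K := Finset.mem_powerset.1 h1
        have hB : p.2 ⊆ Finset.univ \ K := Finset.mem_powerset.1 h2
        have : ((p.1 ∪ p.2) ∩ K, (p.1 ∪ p.2) \ K) = (p.1, p.2) := by
          have e1 : (p.1 ∪ p.2) ∩ K = p.1 := by
            ext i
            simp only [Finset.mem_inter, Finset.mem_union]
            constructor
            · rintro ⟨hi1 | hi2, hiK⟩
              · exact hi1
              · exact absurd hiK (Finset.mem_sdiff.1 (hB hi2)).2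
            · intro hi
              exact ⟨Or.inl hi, hA hi⟩
          have e2 : (p.1 ∪ p.2) \ K = p.2 := by
            ext i
            simp only [Finset.mem_sdiff, Finset.mem_union]
            constructor
            · rintro ⟨hi1 | hi2, hiK⟩
              · exact absurd (hA hi1) hiK
              · exact hi2
            · intro hi
              exact ⟨Or.inr hi, (Finset.mem_sdiff.1 (hB hi)).2⟩
          rw [e1, e2]
        exact this
      · intro J _
        have hcard : J.card = (J ∩ K).card + (J \ K).card :=
          (Finset.card_inter_add_card_sdiff J K).symm
        rw [hcard, pow_add]
        ring
    rw [hre, Finset.sum_product]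
    have : ∀ A ∈ K.powerset, ∑ B ∈ (Finset.univ \ K).powerset,
        (-1:ℝ)^A.card * ((-1:ℝ)^B.card *
          f (fun i => if i ∈ K then V i else if i ∈ B then y i else x i))
        = (-1:ℝ)^A.card * ∑ B ∈ (Finset.univ \ K).powerset,
            (-1:ℝ)^B.card * f (fun i => if i ∈ K then V i else if i ∈ B then y i else x i) := by
      intro A _
      rw [Finset.mul_sum]
    rw [Finset.sum_congr rfl this]
    rw [← Finset.sum_mul]
    rw [sum_powerset_neg_one_real]
  rw [Finset.sum_congr rfl step2]
  rw [Finset.sum_eq_single ∅ ?h1 ?h2]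
  · simp only [eq_self_iff_true, if_true, one_mul, Finset.card_empty, Nat.sub_zero,
      Finset.sdiff_empty]
    have harg : ∀ B : Finset ι, (fun i => if i ∈ (∅ : Finset ι) then V i else if i ∈ B then y i else x i)
        = (fun i => if i ∈ B then y i else x i) := by
      intro B; funext i; simp
    rw [Finset.mul_sum]
    refine Finset.sum_congr rfl fun B hB => ?_
    rw [harg B]
    have hle : B.card ≤ (Finset.univ : Finset ι).card := Finset.card_le_card (Finset.mem_powerset.1 hB)
    rw [neg_one_pow_sub_real hle]
    ring
  case h1 =>
    intro K _ hK
    simp [hK]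
  case h2 =>
    intro h
    exact absurd (Finset.mem_powerset.2 (Finset.empty_subset _)) h

lemma key_alg_right (f : (ι → ℝ) → ℝ) (x y U : ι → ℝ) :
    ∑ J ∈ (Finset.univ : Finset ι).powerset, (-1:ℝ)^J.card *
      delta f U (fun i => if i ∈ J then x i else y i) = delta f x y := by
  classical
  have h1 : ∀ J : Finset ι, delta f U (fun i => if i ∈ J then x i else y i)
      = (-1:ℝ)^(Finset.univ : Finset ι).card *
          delta f (fun i => if i ∈ J then x i else y i) U := by
    intro J
    exact delta_swap f _ _
  have h2 : ∑ J ∈ (Finset.univ : Finset ι).powerset, (-1:ℝ)^J.card *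
      delta f U (fun i => if i ∈ J then x i else y i)
      = (-1:ℝ)^(Finset.univ : Finset ι).card * ∑ J ∈ (Finset.univ : Finset ι).powerset,
          (-1:ℝ)^J.card * delta f (fun i => if i ∈ J then x i else y i) U := by
    rw [Finset.mul_sum]
    refine Finset.sum_congr rfl fun J _ => ?_
    rw [h1 J]
    ring
  rw [h2, key_alg_left f y x U, delta_swap f x y]
  have h3 : ((-1:ℝ)^(Finset.univ : Finset ι).card) * ((-1:ℝ)^(Finset.univ : Finset ι).card) = 1 := by
    rw [← pow_add]
    exact Even.neg_one_pow ⟨_, rfl⟩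
  calc ((-1:ℝ)^(Finset.univ : Finset ι).card) * ((-1:ℝ)^(Finset.univ : Finset ι).card * delta f x y)
      = (((-1:ℝ)^(Finset.univ : Finset ι).card) * ((-1:ℝ)^(Finset.univ : Finset ι).card)) * delta f x y := by ring
    _ = delta f x y := by rw [h3, one_mul]

end Aux2

section Aux3

open Filter Finset

variable {ι : Type*} [Fintype ι] [DecidableEq ι]

lemma tendsto_clamp_left {S : Set ℝ} {c A : ℝ} {φ : ℝ → ℝ}
    (hφ : Filter.Tendsto φ (leftWithin S c) (nhds A)) (hc : φ c = A) :
    Filter.Tendsto (fun s : ℝ => φ (if c - s ∈ S then c - s else c))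
      (nhdsWithin 0 (Set.Ioi 0)) (nhds A) := by
  rw [Filter.tendsto_def]
  intro U hU
  have hAU : A ∈ U := mem_of_mem_nhds hU
  have h1 : φ ⁻¹' U ∈ leftWithin S c := hφ hU
  unfold leftWithin at h1
  rw [mem_nhdsWithin] at h1
  obtain ⟨O, hO, hcO, hsub⟩ := h1
  obtain ⟨θ, hθpos, hball⟩ := Metric.isOpen_iff.1 hO c hcO
  have hIoo : Set.Ioo (0:ℝ) θ ∈ nhdsWithin (0:ℝ) (Set.Ioi 0) :=
    Ioo_mem_nhdsGT_of_mem (Set.mem_Ico.2 ⟨le_refl 0, hθpos⟩)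
  filter_upwards [hIoo] with s hs
  obtain ⟨hs0, hsθ⟩ := hs
  by_cases hmem : c - s ∈ S
  · have hball2 : c - s ∈ Metric.ball c θ := by
      rw [Metric.mem_ball, Real.dist_eq]
      have he : c - s - c = -s := by ring
      rw [he, abs_neg, abs_of_pos hs0]
      exact hsθ
    have hin : c - s ∈ O ∩ (S ∩ Set.Iio c) :=
      ⟨hball hball2, hmem, by simp only [Set.mem_Iio]; linarith⟩
    have := hsub hin
    simpa [hmem] using this
  · simp only [Set.mem_preimage, hmem, if_false, hc]
    exact hAU

lemma tendsto_clamp_right {S : Set ℝ} {c A : ℝ} {φ : ℝ → ℝ}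
    (hφ : Filter.Tendsto φ (rightWithin S c) (nhds A)) (hc : φ c = A) :
    Filter.Tendsto (fun s : ℝ => φ (if c + s ∈ S then c + s else c))
      (nhdsWithin 0 (Set.Ioi 0)) (nhds A) := by
  rw [Filter.tendsto_def]
  intro U hU
  have hAU : A ∈ U := mem_of_mem_nhds hU
  have h1 : φ ⁻¹' U ∈ rightWithin S c := hφ hU
  unfold rightWithin at h1
  rw [mem_nhdsWithin] at h1
  obtain ⟨O, hO, hcO, hsub⟩ := h1
  obtain ⟨θ, hθpos, hball⟩ := Metric.isOpen_iff.1 hO c hcO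
  have hIoo : Set.Ioo (0:ℝ) θ ∈ nhdsWithin (0:ℝ) (Set.Ioi 0) :=
    Ioo_mem_nhdsGT_of_mem (Set.mem_Ico.2 ⟨le_refl 0, hθpos⟩)
  filter_upwards [hIoo] with s hs
  obtain ⟨hs0, hsθ⟩ := hs
  by_cases hmem : c + s ∈ S
  · have hball2 : c + s ∈ Metric.ball c θ := by
      rw [Metric.mem_ball, Real.dist_eq]
      have he : c + s - c = s := by ring
      rw [he, abs_of_pos hs0]
      exact hsθ
    have hin : c + s ∈ O ∩ (S ∩ Set.Ioi c) :=
      ⟨hball hball2, hmem, by simp only [Set.mem_Ioi]; linarith⟩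
    have := hsub hin
    simpa [hmem] using this
  · simp only [Set.mem_preimage, hmem, if_false, hc]
    exact hAU

noncomputable def sideList (ι : Type*) [Fintype ι] (b : Bool) : List (ι × Bool) :=
  (Finset.univ : Finset ι).toList.map (fun i => (i, b))

lemma mem_sideList {b : Bool} {p : ι × Bool} : p ∈ sideList ι b ↔ p.2 = b := by
  constructor
  · intro h
    obtain ⟨i, -, rfl⟩ := List.mem_map.1 h
    rfl
  · intro h
    refine List.mem_map.2 ⟨p.1, Finset.mem_toList.2 (Finset.mem_univ _), ?_⟩
    exact Prod.ext rfl h.symm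

lemma nodup_sideList {b : Bool} : (sideList ι b).Nodup :=
  List.Nodup.map (fun a a' h => congrArg Prod.fst h) (Finset.nodup_toList _)

lemma nodup_sides {b b' : Bool} (h : b ≠ b') : (sideList ι b ++ sideList ι b').Nodup := by
  refine List.Nodup.append nodup_sideList nodup_sideList ?_
  intro p hp hp'
  exact h ((mem_sideList.1 hp).symm.trans (mem_sideList.1 hp'))

lemma cover_sides {b b' : Bool} (h : b ≠ b') (p : ι × Bool) :
    p ∈ sideList ι b ++ sideList ι b' ↔ p ∈ (Finset.univ : Finset (ι × Bool)) := by
  simp only [List.mem_append, mem_sideList, Finset.mem_univ, iff_true]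
  cases hb : p.2 <;> cases b <;> cases b' <;> simp_all

lemma mem_piSet_iff {Ξ : ι → Set ℝ} {z : ι → ℝ} : z ∈ piSet Ξ ↔ ∀ i, z i ∈ Ξ i := by
  unfold piSet
  exact Set.mem_univ_pi

lemma lowPt_mem_piSet {Ξ : ι → Set ℝ} {x : ι → ℝ} (hx : x ∈ piSet Ξ) (δ : ι → ℝ) :
    lowPt Ξ x δ ∈ piSet Ξ := by
  rw [mem_piSet_iff]
  intro i
  unfold lowPt
  split
  · assumption
  · exact mem_piSet_iff.1 hx i

lemma upPt_mem_piSet {Ξ : ι → Set ℝ} {y : ι → ℝ} (hy : y ∈ piSet Ξ) (ε : ι → ℝ) :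
    upPt Ξ y ε ∈ piSet Ξ := by
  rw [mem_piSet_iff]
  intro i
  unfold upPt
  split
  · assumption
  · exact mem_piSet_iff.1 hy i

lemma lowPt_zero {Ξ : ι → Set ℝ} {x : ι → ℝ} : lowPt Ξ x (fun _ => 0) = x := by
  funext i
  simp [lowPt]

lemma upPt_zero {Ξ : ι → Set ℝ} {y : ι → ℝ} : upPt Ξ y (fun _ => 0) = y := by
  funext i
  simp [upPt]

lemma lowPt_update {Ξ : ι → Set ℝ} (x δ : ι → ℝ) (j0 : ι) (s : ℝ) :
    lowPt Ξ x (Function.update δ j0 s) =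
      Function.update (lowPt Ξ x δ) j0 (if x j0 - s ∈ Ξ j0 then x j0 - s else x j0) := by
  funext i
  by_cases h : i = j0
  · subst h; simp [lowPt]
  · simp [lowPt, Function.update_of_ne h]

lemma upPt_update {Ξ : ι → Set ℝ} (y ε : ι → ℝ) (j0 : ι) (s : ℝ) :
    upPt Ξ y (Function.update ε j0 s) =
      Function.update (upPt Ξ y ε) j0 (if y j0 + s ∈ Ξ j0 then y j0 + s else y j0) := by
  funext i
  by_cases h : i = j0
  · subst h; simp [upPt]
  · simp [upPt, Function.update_of_ne h]

lemma pair_update_comp (u : (ι × Bool) → ℝ) (j0 : ι) (b : Bool) (s : ℝ) :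
    (fun i => Function.update u (j0, b) s (i, b)) =
      Function.update (fun i => u (i, b)) j0 s := by
  funext i
  by_cases h : i = j0
  · subst h; simp
  · have h2 : (i, b) ≠ (j0, b) := by simp [h]
    simp [Function.update_of_ne h, Function.update_of_ne h2]

lemma pair_update_other (u : (ι × Bool) → ℝ) (j0 : ι) {b b' : Bool} (h : b' ≠ b) (s : ℝ) :
    (fun i => Function.update u (j0, b) s (i, b')) = (fun i => u (i, b')) := by
  funext i
  have h2 : (i, b') ≠ (j0, b) := by simp [h]
  simp [Function.update_of_ne h2]

lemma tendsto_delta_low {Ξ : ι → Set ℝ} {f : (ι → ℝ) → ℝ} (hL : LeftCts Ξ f)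
    {w V : ι → ℝ} (hw : w ∈ piSet Ξ) (hV : V ∈ piSet Ξ) {j0 : ι} {c : ℝ} (hc : c ∈ Ξ j0) :
    Filter.Tendsto (fun s : ℝ => delta f (Function.update w j0 (if c - s ∈ Ξ j0 then c - s else c)) V)
      (nhdsWithin 0 (Set.Ioi 0)) (nhds (delta f (Function.update w j0 c) V)) := by
  unfold delta deltaOn
  refine tendsto_finset_sum _ fun K _ => ?_
  by_cases hjK : j0 ∈ K
  · have hcst : ∀ τ : ℝ, (fun i => if i ∈ K then V i else Function.update w j0 τ i)
        = (fun i => if i ∈ K then V i else w i) := by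
      intro τ
      funext i
      by_cases hiK : i ∈ K
      · simp [hiK]
      · have hij : i ≠ j0 := fun h => hiK (h ▸ hjK)
        simp [hiK, Function.update_of_ne hij]
    simp only [hcst]
    exact tendsto_const_nhds
  · set z : ι → ℝ := fun i => if i ∈ K then V i else w i with hzdef
    have hcorner : ∀ τ : ℝ, (fun i => if i ∈ K then V i else Function.update w j0 τ i)
        = Function.update z j0 τ := by
      intro τ
      funext i
      by_cases hij : i = j0
      · subst hij; simp [hjK, hzdef]
      · by_cases hiK : i ∈ K <;>
          simp [hiK, Function.update_of_ne hij, hzdef]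
    have hzmem : Function.update z j0 c ∈ piSet Ξ := by
      rw [mem_piSet_iff]
      intro i
      by_cases hij : i = j0
      · subst hij; simpa using hc
      · rw [Function.update_of_ne hij]
        by_cases hiK : i ∈ K
        · simpa [hzdef, hiK] using mem_piSet_iff.1 hV i
        · simpa [hzdef, hiK] using mem_piSet_iff.1 hw i
    have hφ0 := hL (Function.update z j0 c) hzmem j0
    have hidem : ∀ τ : ℝ, Function.update (Function.update z j0 c) j0 τ = Function.update z j0 τ :=
      fun τ => Function.update_idem c τ z
    have hφ : Filter.Tendsto (fun τ => f (Function.update z j0 τ)) (leftWithin (Ξ j0) c)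
        (nhds (f (Function.update z j0 c))) := by
      have h1 := hφ0.congr (fun τ => congrArg f (hidem τ))
      rwa [Function.update_self] at h1
    have hcl := tendsto_clamp_left hφ rfl
    simp only [hcorner]
    exact hcl.const_mul _

end Aux3

section Aux4

open Filter Finset

variable {ι : Type*} [Fintype ι] [DecidableEq ι]

lemma tendsto_delta_up {Ξ : ι → Set ℝ} {f : (ι → ℝ) → ℝ} (hR : RightCts Ξ f)
    {W v : ι → ℝ} (hW : W ∈ piSet Ξ) (hv : v ∈ piSet Ξ) {j0 : ι} {c : ℝ} (hc : c ∈ Ξ j0) :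
    Filter.Tendsto (fun s : ℝ => delta f W (Function.update v j0 (if c + s ∈ Ξ j0 then c + s else c)))
      (nhdsWithin 0 (Set.Ioi 0)) (nhds (delta f W (Function.update v j0 c))) := by
  unfold delta deltaOn
  refine tendsto_finset_sum _ fun K _ => ?_
  by_cases hjK : j0 ∈ K
  · set z : ι → ℝ := fun i => if i ∈ K then v i else W i with hzdef
    have hcorner : ∀ τ : ℝ, (fun i => if i ∈ K then Function.update v j0 τ i else W i)
        = Function.update z j0 τ := by
      intro τ
      funext i
      by_cases hij : i = j0
      · subst hij; simp [hjK, hzdef]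
      · by_cases hiK : i ∈ K <;>
          simp [hiK, Function.update_of_ne hij, hzdef]
    have hzmem : Function.update z j0 c ∈ piSet Ξ := by
      rw [mem_piSet_iff]
      intro i
      by_cases hij : i = j0
      · subst hij; simpa using hc
      · rw [Function.update_of_ne hij]
        by_cases hiK : i ∈ K
        · simpa [hzdef, hiK] using mem_piSet_iff.1 hv i
        · simpa [hzdef, hiK] using mem_piSet_iff.1 hW i
    have hφ0 := hR (Function.update z j0 c) hzmem j0
    have hidem : ∀ τ : ℝ, Function.update (Function.update z j0 c) j0 τ = Function.update z j0 τ :=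
      fun τ => Function.update_idem c τ z
    have hφ : Filter.Tendsto (fun τ => f (Function.update z j0 τ)) (rightWithin (Ξ j0) c)
        (nhds (f (Function.update z j0 c))) := by
      have h1 := hφ0.congr (fun τ => congrArg f (hidem τ))
      rwa [Function.update_self] at h1
    have hcl := tendsto_clamp_right hφ rfl
    simp only [hcorner]
    exact hcl.const_mul _
  · have hcst : ∀ τ : ℝ, (fun i => if i ∈ K then Function.update v j0 τ i else W i)
        = (fun i => if i ∈ K then v i else W i) := by
      intro τ
      funext i
      by_cases hiK : i ∈ K
      · have hij : i ≠ j0 := fun h => hjK (h ▸ hiK)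
        simp [hiK, Function.update_of_ne hij]
      · simp [hiK]
    simp only [hcst]
    exact tendsto_const_nhds

lemma collapse_left {Ξ : ι → Set ℝ} {f : (ι → ℝ) → ℝ} (hL : LeftCts Ξ f)
    {x' y : ι → ℝ} (hx' : x' ∈ piSet Ξ) (hy : y ∈ piSet Ξ) {r : ℝ}
    (hD : HasDLim Ξ f x' y r) :
    IterLim (fun _ : ι × Bool => nhdsWithin (0:ℝ) (Set.Ioi 0)) (sideList ι true)
      (fun t => delta f x' (upPt Ξ y (fun i => t (i, true)))) r := by
  classical
  have hF : ∀ p : ι × Bool, (nhdsWithin (0:ℝ) (Set.Ioi 0)).NeBot := fun _ => inferInstance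
  have hnd : (sideList ι true ++ sideList ι false).Nodup := nodup_sides (by simp)
  have hfull := hD (sideList ι true ++ sideList ι false) hnd
    (fun p => cover_sides (by simp) p)
  refine iterLim_peel hF (sideList ι true) hnd ?_ ?_ ?_ hfull
  · intro u u' he
    have huu : u = u' := funext fun p => he p ((cover_sides (by simp) p).2 (Finset.mem_univ _))
    rw [huu]
  · intro u u' he
    have harg : (fun i => u (i, true)) = (fun i => u' (i, true)) :=
      funext fun i => he (i, true) (mem_sideList.2 rfl)
    simp only [harg]
  · intro t
    have hVmem : upPt Ξ y (fun i => t (i, true)) ∈ piSet Ξ := upPt_mem_piSet hy _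
    have hmain : IterLim (fun _ : ι × Bool => nhdsWithin (0:ℝ) (Set.Ioi 0)) (sideList ι false)
        (fun u => delta f (lowPt Ξ x' (fun i => u (i, false))) (upPt Ξ y (fun i => t (i, true))))
        ((fun u => delta f (lowPt Ξ x' (fun i => u (i, false)))
          (upPt Ξ y (fun i => t (i, true)))) (fun _ => 0)) := by
      refine iterLim_of_exact nodup_sideList ?_ ?_
      · intro u u' he
        have harg : (fun i => u (i, false)) = (fun i => u' (i, false)) :=
          funext fun i => he (i, false) (mem_sideList.2 rfl)
        simp only [harg]
      · rintro ⟨j0, b⟩ hj u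
        have hb : b = false := mem_sideList.1 hj
        subst hb
        have hrw : ∀ s : ℝ, delta f (lowPt Ξ x'
              (fun i => Function.update u (j0, false) s (i, false)))
              (upPt Ξ y (fun i => t (i, true)))
            = delta f (Function.update (lowPt Ξ x' (fun i => u (i, false))) j0
                (if x' j0 - s ∈ Ξ j0 then x' j0 - s else x' j0))
                (upPt Ξ y (fun i => t (i, true))) := by
          intro s
          rw [pair_update_comp u j0 false s, lowPt_update]
        have h0 : delta f (lowPt Ξ x'
              (fun i => Function.update u (j0, false) 0 (i, false)))
              (upPt Ξ y (fun i => t (i, true)))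
            = delta f (Function.update (lowPt Ξ x' (fun i => u (i, false))) j0 (x' j0))
                (upPt Ξ y (fun i => t (i, true))) := by
          rw [hrw 0, sub_zero, if_pos (mem_piSet_iff.1 hx' j0)]
        rw [h0]
        have hT := tendsto_delta_low hL (lowPt_mem_piSet hx' (fun i => u (i, false)))
          hVmem (mem_piSet_iff.1 hx' j0)
        exact hT.congr (fun s => (hrw s).symm)
    have hval : (fun u => delta f (lowPt Ξ x' (fun i => u (i, false)))
        (upPt Ξ y (fun i => t (i, true)))) (fun _ => 0)
        = delta f x' (upPt Ξ y (fun i => t (i, true))) := by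
      simp only [lowPt_zero]
    rw [hval] at hmain
    refine iterLim_congr (fun u => ?_) hmain
    have e1 : (fun i => if ((i, false) : ι × Bool) ∈ sideList ι false
        then u (i, false) else t (i, false)) = fun i => u (i, false) :=
      funext fun i => if_pos (mem_sideList.2 rfl)
    have e2 : (fun i => if ((i, true) : ι × Bool) ∈ sideList ι false
        then u (i, true) else t (i, true)) = fun i => t (i, true) :=
      funext fun i => if_neg (by simp [mem_sideList])
    simp [mem_sideList]

lemma collapse_right {Ξ : ι → Set ℝ} {f : (ι → ℝ) → ℝ} (hR : RightCts Ξ f)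
    {x y' : ι → ℝ} (hx : x ∈ piSet Ξ) (hy' : y' ∈ piSet Ξ) {r : ℝ}
    (hD : HasDLim Ξ f x y' r) :
    IterLim (fun _ : ι × Bool => nhdsWithin (0:ℝ) (Set.Ioi 0)) (sideList ι false)
      (fun t => delta f (lowPt Ξ x (fun i => t (i, false))) y') r := by
  classical
  have hF : ∀ p : ι × Bool, (nhdsWithin (0:ℝ) (Set.Ioi 0)).NeBot := fun _ => inferInstance
  have hnd : (sideList ι false ++ sideList ι true).Nodup := nodup_sides (by simp)
  have hfull := hD (sideList ι false ++ sideList ι true) hnd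
    (fun p => cover_sides (by simp) p)
  refine iterLim_peel hF (sideList ι false) hnd ?_ ?_ ?_ hfull
  · intro u u' he
    have huu : u = u' := funext fun p => he p ((cover_sides (by simp) p).2 (Finset.mem_univ _))
    rw [huu]
  · intro u u' he
    have harg : (fun i => u (i, false)) = (fun i => u' (i, false)) :=
      funext fun i => he (i, false) (mem_sideList.2 rfl)
    simp only [harg]
  · intro t
    have hWmem : lowPt Ξ x (fun i => t (i, false)) ∈ piSet Ξ := lowPt_mem_piSet hx _
    have hmain : IterLim (fun _ : ι × Bool => nhdsWithin (0:ℝ) (Set.Ioi 0)) (sideList ι true)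
        (fun u => delta f (lowPt Ξ x (fun i => t (i, false))) (upPt Ξ y' (fun i => u (i, true))))
        ((fun u => delta f (lowPt Ξ x (fun i => t (i, false)))
          (upPt Ξ y' (fun i => u (i, true)))) (fun _ => 0)) := by
      refine iterLim_of_exact nodup_sideList ?_ ?_
      · intro u u' he
        have harg : (fun i => u (i, true)) = (fun i => u' (i, true)) :=
          funext fun i => he (i, true) (mem_sideList.2 rfl)
        simp only [harg]
      · rintro ⟨j0, b⟩ hj u
        have hb : b = true := mem_sideList.1 hj
        subst hb
        have hrw : ∀ s : ℝ, delta f (lowPt Ξ x (fun i => t (i, false)))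
              (upPt Ξ y' (fun i => Function.update u (j0, true) s (i, true)))
            = delta f (lowPt Ξ x (fun i => t (i, false)))
                (Function.update (upPt Ξ y' (fun i => u (i, true))) j0
                  (if y' j0 + s ∈ Ξ j0 then y' j0 + s else y' j0)) := by
          intro s
          rw [pair_update_comp u j0 true s, upPt_update]
        have h0 : delta f (lowPt Ξ x (fun i => t (i, false)))
              (upPt Ξ y' (fun i => Function.update u (j0, true) 0 (i, true)))
            = delta f (lowPt Ξ x (fun i => t (i, false)))
                (Function.update (upPt Ξ y' (fun i => u (i, true))) j0 (y' j0)) := by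
          rw [hrw 0, add_zero, if_pos (mem_piSet_iff.1 hy' j0)]
        rw [h0]
        have hT := tendsto_delta_up hR hWmem (upPt_mem_piSet hy' (fun i => u (i, true)))
          (mem_piSet_iff.1 hy' j0)
        exact hT.congr (fun s => (hrw s).symm)
    have hval : (fun u => delta f (lowPt Ξ x (fun i => t (i, false)))
        (upPt Ξ y' (fun i => u (i, true)))) (fun _ => 0)
        = delta f (lowPt Ξ x (fun i => t (i, false))) y' := by
      simp only [upPt_zero]
    rw [hval] at hmain
    refine iterLim_congr (fun u => ?_) hmain
    have e1 : (fun i => if ((i, true) : ι × Bool) ∈ sideList ι true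
        then u (i, true) else t (i, true)) = fun i => u (i, true) :=
      funext fun i => if_pos (mem_sideList.2 rfl)
    have e2 : (fun i => if ((i, false) : ι × Bool) ∈ sideList ι true
        then u (i, false) else t (i, false)) = fun i => t (i, false) :=
      funext fun i => if_neg (by simp [mem_sideList])
    simp [mem_sideList]

lemma dlim_eq_delta {Ξ : ι → Set ℝ} {f : (ι → ℝ) → ℝ} (hL : LeftCts Ξ f) (hR : RightCts Ξ f)
    {x y : ι → ℝ} (hx : x ∈ piSet Ξ) (hy : y ∈ piSet Ξ) {r : ℝ}
    (hD : HasDLim Ξ f x y r) : r = delta f x y := by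
  classical
  have hF : ∀ p : ι × Bool, (nhdsWithin (0:ℝ) (Set.Ioi 0)).NeBot := fun _ => inferInstance
  have hnd : (sideList ι true ++ sideList ι false).Nodup := nodup_sides (by simp)
  have hfull := hD (sideList ι true ++ sideList ι false) hnd
    (fun p => cover_sides (by simp) p)
  have hexact : IterLim (fun _ : ι × Bool => nhdsWithin (0:ℝ) (Set.Ioi 0))
      (sideList ι true ++ sideList ι false)
      (fun t => delta f (lowPt Ξ x (fun i => t (i, false))) (upPt Ξ y (fun i => t (i, true))))
      ((fun t => delta f (lowPt Ξ x (fun i => t (i, false)))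
        (upPt Ξ y (fun i => t (i, true)))) (fun _ => 0)) := by
    refine iterLim_of_exact hnd ?_ ?_
    · intro u u' he
      have e1 : (fun i => u (i, false)) = (fun i => u' (i, false)) :=
        funext fun i => he (i, false) (by simp [List.mem_append, mem_sideList])
      have e2 : (fun i => u (i, true)) = (fun i => u' (i, true)) :=
        funext fun i => he (i, true) (by simp [List.mem_append, mem_sideList])
      simp only [e1, e2]
    · rintro ⟨j0, b⟩ hj u
      cases b
      · have hrw : ∀ s : ℝ,
            delta f (lowPt Ξ x (fun i => Function.update u (j0, false) s (i, false)))
              (upPt Ξ y (fun i => Function.update u (j0, false) s (i, true)))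
            = delta f (Function.update (lowPt Ξ x (fun i => u (i, false))) j0
                (if x j0 - s ∈ Ξ j0 then x j0 - s else x j0))
                (upPt Ξ y (fun i => u (i, true))) := by
          intro s
          rw [pair_update_comp u j0 false s, lowPt_update,
            pair_update_other u j0 (by simp : (true : Bool) ≠ false) s]
        have h0 : delta f (lowPt Ξ x (fun i => Function.update u (j0, false) 0 (i, false)))
              (upPt Ξ y (fun i => Function.update u (j0, false) 0 (i, true)))
            = delta f (Function.update (lowPt Ξ x (fun i => u (i, false))) j0 (x j0))
                (upPt Ξ y (fun i => u (i, true))) := by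
          rw [hrw 0, sub_zero, if_pos (mem_piSet_iff.1 hx j0)]
        rw [h0]
        have hT := tendsto_delta_low hL (lowPt_mem_piSet hx (fun i => u (i, false)))
          (upPt_mem_piSet hy (fun i => u (i, true))) (mem_piSet_iff.1 hx j0)
        exact hT.congr (fun s => (hrw s).symm)
      · have hrw : ∀ s : ℝ,
            delta f (lowPt Ξ x (fun i => Function.update u (j0, true) s (i, false)))
              (upPt Ξ y (fun i => Function.update u (j0, true) s (i, true)))
            = delta f (lowPt Ξ x (fun i => u (i, false)))
                (Function.update (upPt Ξ y (fun i => u (i, true))) j0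
                  (if y j0 + s ∈ Ξ j0 then y j0 + s else y j0)) := by
          intro s
          rw [pair_update_comp u j0 true s, upPt_update,
            pair_update_other u j0 (by simp : (false : Bool) ≠ true) s]
        have h0 : delta f (lowPt Ξ x (fun i => Function.update u (j0, true) 0 (i, false)))
              (upPt Ξ y (fun i => Function.update u (j0, true) 0 (i, true)))
            = delta f (lowPt Ξ x (fun i => u (i, false)))
                (Function.update (upPt Ξ y (fun i => u (i, true))) j0 (y j0)) := by
          rw [hrw 0, add_zero, if_pos (mem_piSet_iff.1 hy j0)]
        rw [h0]
        have hT := tendsto_delta_up hR (lowPt_mem_piSet hx (fun i => u (i, false)))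
          (upPt_mem_piSet hy (fun i => u (i, true))) (mem_piSet_iff.1 hy j0)
        exact hT.congr (fun s => (hrw s).symm)
  have hv : (fun t : (ι × Bool) → ℝ => delta f (lowPt Ξ x (fun i => t (i, false)))
      (upPt Ξ y (fun i => t (i, true)))) (fun _ => 0) = delta f x y := by
    simp only [lowPt_zero, upPt_zero]
  rw [hv] at hexact
  exact iterLim_unique hF hfull hexact

end Aux4

section Aux5

open Filter Finset MeasureTheory

variable {ι : Type*} [Fintype ι] [DecidableEq ι]

lemma coe_ennreal_eq (a : ENNReal) (h : a ≠ ⊤) : (a : EReal) = ((a.toReal : ℝ) : EReal) := by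
  conv_lhs => rw [← ENNReal.ofReal_toReal h]
  rw [EReal.coe_ennreal_ofReal, max_eq_left ENNReal.toReal_nonneg]

lemma signedM_val_real {α : Type*} [MeasurableSpace α] {ν : SignedM α} {B : Set α} {r : ℝ}
    (h : ν.val B = (r : EReal)) :
    ν.pos B ≠ ⊤ ∧ ν.neg B ≠ ⊤ ∧ (ν.pos B).toReal - (ν.neg B).toReal = r := by
  unfold SignedM.val at h
  by_cases hp : ν.pos B = ⊤
  · exfalso
    rw [hp, EReal.coe_ennreal_top] at h
    by_cases hq : ν.neg B = ⊤
    · rw [hq, EReal.coe_ennreal_top, sub_eq_add_neg, EReal.neg_top, EReal.add_bot] at h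
      exact absurd h (by simp)
    · rw [coe_ennreal_eq _ hq, EReal.top_sub_coe] at h
      exact absurd h (by simp)
  · by_cases hq : ν.neg B = ⊤
    · exfalso
      rw [hq, EReal.coe_ennreal_top, coe_ennreal_eq _ hp, sub_eq_add_neg, EReal.neg_top,
        EReal.add_bot] at h
      exact absurd h (by simp)
    · refine ⟨hp, hq, ?_⟩
      rw [coe_ennreal_eq _ hp, coe_ennreal_eq _ hq, ← EReal.coe_sub] at h
      exact_mod_cast h

lemma signedM_val_eq {α : Type*} [MeasurableSpace α] {ν : SignedM α} {B : Set α}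
    (hp : ν.pos B ≠ ⊤) (hq : ν.neg B ≠ ⊤) :
    ν.val B = (((ν.pos B).toReal - (ν.neg B).toReal : ℝ) : EReal) := by
  unfold SignedM.val
  rw [coe_ennreal_eq _ hp, coe_ennreal_eq _ hq, ← EReal.coe_sub]

lemma comb_sum (a : Finset ι → ℝ) :
    ∑ J ∈ (Finset.univ : Finset ι).powerset, (-1:ℝ)^J.card *
      (∑ T ∈ (Finset.univ : Finset ι).powerset.filter (fun T => J ⊆ T), a T) = a ∅ := by
  classical
  have h1 : ∀ J ∈ (Finset.univ : Finset ι).powerset,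
      (-1:ℝ)^J.card * (∑ T ∈ (Finset.univ : Finset ι).powerset.filter (fun T => J ⊆ T), a T)
      = ∑ T ∈ (Finset.univ : Finset ι).powerset,
          (if J ⊆ T then (-1:ℝ)^J.card * a T else 0) := by
    intro J _
    rw [Finset.mul_sum, Finset.sum_filter]
  rw [Finset.sum_congr rfl h1, Finset.sum_comm]
  have h2 : ∀ T ∈ (Finset.univ : Finset ι).powerset,
      (∑ J ∈ (Finset.univ : Finset ι).powerset, if J ⊆ T then (-1:ℝ)^J.card * a T else 0)
      = (if T = ∅ then (1:ℝ) else 0) * a T := by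
    intro T _
    rw [← Finset.sum_filter]
    have hfe : (Finset.univ : Finset ι).powerset.filter (fun J => J ⊆ T) = T.powerset := by
      ext J
      simp [Finset.mem_powerset, Finset.mem_filter, Finset.subset_univ]
    rw [hfe, ← Finset.sum_mul, sum_powerset_neg_one_real]
  rw [Finset.sum_congr rfl h2, Finset.sum_eq_single ∅]
  · simp
  · intro T _ hT
    simp [hT]
  · intro h
    exact absurd (Finset.mem_powerset.2 (Finset.empty_subset _)) h

lemma piece_meas_left (x y : ι → ℝ) (T : Finset ι) :
    MeasurableSet (Set.univ.pi (fun i => if i ∈ T then ({y i} : Set ℝ) else Set.Ico (x i) (y i))) := by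
  refine MeasurableSet.univ_pi fun i => ?_
  split
  · exact measurableSet_singleton _
  · exact measurableSet_Ico

lemma piece_meas_right (x y : ι → ℝ) (T : Finset ι) :
    MeasurableSet (Set.univ.pi (fun i => if i ∈ T then ({x i} : Set ℝ) else Set.Ioc (x i) (y i))) := by
  refine MeasurableSet.univ_pi fun i => ?_
  split
  · exact measurableSet_singleton _
  · exact measurableSet_Ioc

lemma piece_disj (C D : ι → Set ℝ) (hCD : ∀ i, Disjoint (C i) (D i)) (s : Finset (Finset ι)) :
    (↑s : Set (Finset ι)).PairwiseDisjoint
      (fun T => Set.univ.pi fun i => if i ∈ T then C i else D i) := by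
  intro T _ T' _ hTT'
  rw [Function.onFun, Set.disjoint_left]
  intro z hz hz'
  apply hTT'
  ext i
  have h1 := Set.mem_univ_pi.1 hz i
  have h2 := Set.mem_univ_pi.1 hz' i
  constructor
  · intro hiT
    by_contra hiT'
    rw [if_pos hiT] at h1
    rw [if_neg hiT'] at h2
    exact Set.disjoint_left.1 (hCD i) h1 h2
  · intro hiT'
    by_contra hiT
    rw [if_neg hiT] at h1
    rw [if_pos hiT'] at h2
    exact Set.disjoint_left.1 (hCD i) h2 h1

lemma disj_up (x y : ι → ℝ) (i : ι) : Disjoint ({y i} : Set ℝ) (Set.Ico (x i) (y i)) := by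
  rw [Set.disjoint_singleton_left]
  intro h
  exact lt_irrefl _ (Set.mem_Ico.1 h).2

lemma disj_lo (x y : ι → ℝ) (i : ι) : Disjoint ({x i} : Set ℝ) (Set.Ioc (x i) (y i)) := by
  rw [Set.disjoint_singleton_left]
  intro h
  exact lt_irrefl _ (Set.mem_Ioc.1 h).1

lemma icc_decomp_left {x y : ι → ℝ} (hxy : x ≤ y) (J : Finset ι) :
    Set.Icc (fun i => if i ∈ J then y i else x i) y
      = ⋃ T ∈ (Finset.univ : Finset ι).powerset.filter (fun T => J ⊆ T),
          Set.univ.pi (fun i => if i ∈ T then ({y i} : Set ℝ) else Set.Ico (x i) (y i)) := by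
  classical
  ext z
  simp only [Set.mem_iUnion, Finset.mem_filter, Finset.mem_powerset, exists_prop, Set.mem_Icc,
    Pi.le_def]
  constructor
  · rintro ⟨hlo, hhi⟩
    refine ⟨Finset.univ.filter (fun i => z i = y i), ⟨Finset.subset_univ _, ?_⟩, ?_⟩
    · intro i hiJ
      refine Finset.mem_filter.2 ⟨Finset.mem_univ _, ?_⟩
      have h1 : y i ≤ z i := by have h := hlo i; rwa [if_pos hiJ] at h
      exact le_antisymm (hhi i) h1
    · rw [Set.mem_univ_pi]
      intro i
      split
      · next h => exact (Finset.mem_filter.1 h).2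
      · next h =>
          have hne : z i ≠ y i := fun hEq => h (Finset.mem_filter.2 ⟨Finset.mem_univ _, hEq⟩)
          have hiJ : i ∉ J := by
            intro hiJ
            have h1 : y i ≤ z i := by have h := hlo i; rwa [if_pos hiJ] at h
            exact hne (le_antisymm (hhi i) h1)
          refine Set.mem_Ico.2 ⟨?_, lt_of_le_of_ne (hhi i) hne⟩
          have h := hlo i
          rwa [if_neg hiJ] at h
  · rintro ⟨T, ⟨⟨hTu, hJT⟩, hzT⟩⟩
    rw [Set.mem_univ_pi] at hzT
    constructor
    · intro i
      by_cases hiJ : i ∈ J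
      · rw [if_pos hiJ]
        have h := hzT i
        rw [if_pos (hJT hiJ), Set.mem_singleton_iff] at h
        exact le_of_eq h.symm
      · rw [if_neg hiJ]
        by_cases hiT : i ∈ T
        · have h := hzT i
          rw [if_pos hiT, Set.mem_singleton_iff] at h
          rw [h]
          exact hxy i
        · have h := hzT i
          rw [if_neg hiT] at h
          exact (Set.mem_Ico.1 h).1
    · intro i
      by_cases hiT : i ∈ T
      · have h := hzT i
        rw [if_pos hiT, Set.mem_singleton_iff] at h
        exact le_of_eq h
      · have h := hzT i
        rw [if_neg hiT] at h
        exact le_of_lt (Set.mem_Ico.1 h).2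

lemma icc_decomp_right {x y : ι → ℝ} (hxy : x ≤ y) (J : Finset ι) :
    Set.Icc x (fun i => if i ∈ J then x i else y i)
      = ⋃ T ∈ (Finset.univ : Finset ι).powerset.filter (fun T => J ⊆ T),
          Set.univ.pi (fun i => if i ∈ T then ({x i} : Set ℝ) else Set.Ioc (x i) (y i)) := by
  classical
  ext z
  simp only [Set.mem_iUnion, Finset.mem_filter, Finset.mem_powerset, exists_prop, Set.mem_Icc,
    Pi.le_def]
  constructor
  · rintro ⟨hlo, hhi⟩
    refine ⟨Finset.univ.filter (fun i => z i = x i), ⟨Finset.subset_univ _, ?_⟩, ?_⟩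
    · intro i hiJ
      refine Finset.mem_filter.2 ⟨Finset.mem_univ _, ?_⟩
      have h1 : z i ≤ x i := by have h := hhi i; rwa [if_pos hiJ] at h
      exact le_antisymm h1 (hlo i)
    · rw [Set.mem_univ_pi]
      intro i
      split
      · next h => exact (Finset.mem_filter.1 h).2
      · next h =>
          have hne : z i ≠ x i := fun hEq => h (Finset.mem_filter.2 ⟨Finset.mem_univ _, hEq⟩)
          have hiJ : i ∉ J := by
            intro hiJ
            have h1 : z i ≤ x i := by have h := hhi i; rwa [if_pos hiJ] at h
            exact hne (le_antisymm h1 (hlo i))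
          refine Set.mem_Ioc.2 ⟨lt_of_le_of_ne (hlo i) (Ne.symm hne), ?_⟩
          have h := hhi i
          rwa [if_neg hiJ] at h
  · rintro ⟨T, ⟨⟨hTu, hJT⟩, hzT⟩⟩
    rw [Set.mem_univ_pi] at hzT
    constructor
    · intro i
      by_cases hiT : i ∈ T
      · have h := hzT i
        rw [if_pos hiT, Set.mem_singleton_iff] at h
        exact le_of_eq h.symm
      · have h := hzT i
        rw [if_neg hiT] at h
        exact le_of_lt (Set.mem_Ioc.1 h).1
    · intro i
      by_cases hiJ : i ∈ J
      · rw [if_pos hiJ]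
        have h := hzT i
        rw [if_pos (hJT hiJ), Set.mem_singleton_iff] at h
        exact le_of_eq h
      · rw [if_neg hiJ]
        by_cases hiT : i ∈ T
        · have h := hzT i
          rw [if_pos hiT, Set.mem_singleton_iff] at h
          rw [h]
          exact hxy i
        · have h := hzT i
          rw [if_neg hiT] at h
          exact (Set.mem_Ioc.1 h).2

lemma boxIco_eq_piece (x y : ι → ℝ) :
    boxIco x y = Set.univ.pi
      (fun i => if i ∈ (∅ : Finset ι) then ({y i} : Set ℝ) else Set.Ico (x i) (y i)) := by
  ext z
  simp [boxIco, Set.mem_univ_pi]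

lemma boxIoc_eq_piece (x y : ι → ℝ) :
    boxIoc x y = Set.univ.pi
      (fun i => if i ∈ (∅ : Finset ι) then ({x i} : Set ℝ) else Set.Ioc (x i) (y i)) := by
  ext z
  simp [boxIoc, Set.mem_univ_pi]

lemma piece_subset_icc_left {x y : ι → ℝ} (hxy : x ≤ y) (T : Finset ι) :
    Set.univ.pi (fun i => if i ∈ T then ({y i} : Set ℝ) else Set.Ico (x i) (y i))
      ⊆ Set.Icc x y := by
  intro z hz
  rw [Set.mem_univ_pi] at hz
  constructor
  · intro i
    have h := hz i
    by_cases hiT : i ∈ T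
    · rw [if_pos hiT, Set.mem_singleton_iff] at h
      rw [h]
      exact hxy i
    · rw [if_neg hiT] at h
      exact (Set.mem_Ico.1 h).1
  · intro i
    have h := hz i
    by_cases hiT : i ∈ T
    · rw [if_pos hiT, Set.mem_singleton_iff] at h
      exact le_of_eq h
    · rw [if_neg hiT] at h
      exact le_of_lt (Set.mem_Ico.1 h).2

lemma piece_subset_icc_right {x y : ι → ℝ} (hxy : x ≤ y) (T : Finset ι) :
    Set.univ.pi (fun i => if i ∈ T then ({x i} : Set ℝ) else Set.Ioc (x i) (y i))
      ⊆ Set.Icc x y := by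
  intro z hz
  rw [Set.mem_univ_pi] at hz
  constructor
  · intro i
    have h := hz i
    by_cases hiT : i ∈ T
    · rw [if_pos hiT, Set.mem_singleton_iff] at h
      exact le_of_eq h.symm
    · rw [if_neg hiT] at h
      exact le_of_lt (Set.mem_Ioc.1 h).1
  · intro i
    have h := hz i
    by_cases hiT : i ∈ T
    · rw [if_pos hiT, Set.mem_singleton_iff] at h
      rw [h]
      exact hxy i
    · rw [if_neg hiT] at h
      exact (Set.mem_Ioc.1 h).2

end Aux5


section Aux6

open Filter Finset MeasureTheory

variable {ι : Type*} [Fintype ι] [DecidableEq ι]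

lemma update_mem_piSet {Ξ : ι → Set ℝ} {z : ι → ℝ} (hz : z ∈ piSet Ξ) {i : ι} {t : ℝ}
    (ht : t ∈ Ξ i) : Function.update z i t ∈ piSet Ξ := by
  rw [mem_piSet_iff]
  intro j
  by_cases hj : j = i
  · subst hj; simpa using ht
  · rw [Function.update_of_ne hj]; exact mem_piSet_iff.1 hz j

lemma tendsto_update_within {Ξ : ι → Set ℝ} {z : ι → ℝ} (hz : z ∈ piSet Ξ) (i : ι)
    {T : Set ℝ} (hT : T ⊆ Ξ i) :
    Filter.Tendsto (fun t : ℝ => Function.update z i t) (nhdsWithin (z i) T)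
      (nhdsWithin z (piSet Ξ)) := by
  refine tendsto_nhdsWithin_of_tendsto_nhds_of_eventually_within _ ?_ ?_
  · have hupd : Continuous (fun t : ℝ => Function.update z i t) :=
      continuous_const.update i continuous_id
    have h1 := hupd.tendsto (z i)
    rw [Function.update_eq_self] at h1
    exact h1.mono_left nhdsWithin_le_nhds
  · filter_upwards [self_mem_nhdsWithin] with t ht
    exact update_mem_piSet hz (hT ht)

lemma leftCts_of_continuousOn {Ξ : ι → Set ℝ} {f : (ι → ℝ) → ℝ}
    (hC : ContinuousOn f (piSet Ξ)) : LeftCts Ξ f := by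
  intro z hz i
  unfold leftWithin
  exact Filter.Tendsto.comp (hC z hz) (tendsto_update_within hz i Set.inter_subset_left)

lemma rightCts_of_continuousOn {Ξ : ι → Set ℝ} {f : (ι → ℝ) → ℝ}
    (hC : ContinuousOn f (piSet Ξ)) : RightCts Ξ f := by
  intro z hz i
  unfold rightWithin
  exact Filter.Tendsto.comp (hC z hz) (tendsto_update_within hz i Set.inter_subset_left)

lemma slab_null {Ξ : ι → Set ℝ} (hΞ : IsIntervalFamily Ξ) {ν : SignedM (ι → ℝ)}
    (hzero : ∀ u v : ι → ℝ, u ∈ piSet Ξ → v ∈ piSet Ξ → u ≤ v → (∃ i0, u i0 = v i0) →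
      ν.val (Set.Icc u v) = ((0:ℝ) : EReal))
    {x y : ι → ℝ} (hx : x ∈ piSet Ξ) (hy : y ∈ piSet Ξ) (hxy : x ≤ y)
    (hp0 : ν.pos (Set.Icc x y) ≠ ⊤) (hq0 : ν.neg (Set.Icc x y) ≠ ⊤)
    (i0 : ι) {c : ℝ} (hcΞ : c ∈ Ξ i0) (hc1 : x i0 ≤ c) (hc2 : c ≤ y i0) :
    ν.pos (Set.Icc x y ∩ {z | z i0 = c}) = 0 ∧ ν.neg (Set.Icc x y ∩ {z | z i0 = c}) = 0 := by
  classical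
  set W := Set.Icc x y ∩ {z | z i0 = c} with hWdef
  have hWsub : W ⊆ Set.Icc x y := Set.inter_subset_left
  have hWm : MeasurableSet W := by
    refine MeasurableSet.inter ?_ ?_
    · rw [← Set.pi_univ_Icc]
      exact MeasurableSet.univ_pi fun i => measurableSet_Icc
    · have he : {z : ι → ℝ | z i0 = c} = (fun z : ι → ℝ => z i0) ⁻¹' {c} := rfl
      rw [he]
      exact (measurable_pi_apply i0) (measurableSet_singleton c)
  have hkey : ∀ b : ι → ℝ, ν.pos (Set.univ.pi (fun j => Set.Iic (b j)) ∩ W)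
      = ν.neg (Set.univ.pi (fun j => Set.Iic (b j)) ∩ W) := by
    intro b
    by_cases hcb : c ≤ b i0
    · set A : ι → ℝ := Function.update x i0 c with hA
      set Bv : ι → ℝ := Function.update (fun j => min (y j) (b j)) i0 c with hBv
      have hWb : Set.univ.pi (fun j => Set.Iic (b j)) ∩ W = Set.Icc A Bv := by
        ext z
        simp only [Set.mem_inter_iff, Set.mem_univ_pi, Set.mem_Iic, Set.mem_Icc, hWdef,
          Set.mem_setOf_eq, Pi.le_def]
        constructor
        · rintro ⟨hzb, ⟨hxz, hzy⟩, hzc⟩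
          constructor
          · intro j
            by_cases hj : j = i0
            · subst hj; rw [hA, Function.update_self, hzc]
            · rw [hA, Function.update_of_ne hj]; exact hxz j
          · intro j
            by_cases hj : j = i0
            · subst hj; rw [hBv, Function.update_self, hzc]
            · rw [hBv, Function.update_of_ne hj]
              exact le_min (hzy j) (hzb j)
        · rintro ⟨hAz, hzB⟩
          have hzc : z i0 = c := by
            have h1 := hAz i0
            have h2 := hzB i0
            rw [hA, Function.update_self] at h1
            rw [hBv, Function.update_self] at h2
            exact le_antisymm h2 h1
          refine ⟨?_, ⟨?_, ?_⟩, hzc⟩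
          · intro j
            by_cases hj : j = i0
            · subst hj; rw [hzc]; exact hcb
            · have h := hzB j
              rw [hBv, Function.update_of_ne hj] at h
              exact le_trans h (min_le_right _ _)
          · intro j
            by_cases hj : j = i0
            · subst hj; rw [hzc]; exact hc1
            · have h := hAz j
              rwa [hA, Function.update_of_ne hj] at h
          · intro j
            by_cases hj : j = i0
            · subst hj; rw [hzc]; exact hc2
            · have h := hzB j
              rw [hBv, Function.update_of_ne hj] at h
              exact le_trans h (min_le_left _ _)
      rw [hWb]
      by_cases hAB : A ≤ Bv
      · have hAmem : A ∈ piSet Ξ := by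
          rw [mem_piSet_iff]
          intro j
          by_cases hj : j = i0
          · subst hj; simpa [hA] using hcΞ
          · rw [hA, Function.update_of_ne hj]; exact mem_piSet_iff.1 hx j
        have hBmem : Bv ∈ piSet Ξ := by
          rw [mem_piSet_iff]
          intro j
          by_cases hj : j = i0
          · subst hj; simpa [hBv] using hcΞ
          · rw [hBv, Function.update_of_ne hj]
            have h1 : x j ≤ min (y j) (b j) := by
              have h := hAB j
              rwa [hA, Function.update_of_ne hj, hBv, Function.update_of_ne hj] at h
            exact (hΞ j).2.out (mem_piSet_iff.1 hx j) (mem_piSet_iff.1 hy j)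
              ⟨h1, min_le_left _ _⟩
        have hdeg : ∃ j, A j = Bv j :=
          ⟨i0, by rw [hA, hBv, Function.update_self, Function.update_self]⟩
        obtain ⟨hpf, hqf, hreal⟩ := signedM_val_real (hzero A Bv hAmem hBmem hAB hdeg)
        have heq : (ν.pos (Set.Icc A Bv)).toReal = (ν.neg (Set.Icc A Bv)).toReal := by
          linarith
        exact (ENNReal.toReal_eq_toReal_iff' hpf hqf).1 heq
      · rw [Set.Icc_eq_empty hAB]
        simp
    · have hWb : Set.univ.pi (fun j => Set.Iic (b j)) ∩ W = ∅ := by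
        ext z
        simp only [Set.mem_inter_iff, Set.mem_univ_pi, Set.mem_Iic, hWdef, Set.mem_setOf_eq,
          Set.mem_empty_iff_false, iff_false, not_and]
        intro hzb _ hzc
        exact hcb (hzc ▸ hzb i0)
      rw [hWb]
      simp
  set C : Set (Set (ι → ℝ)) := Set.univ.pi '' Set.univ.pi (fun _ : ι => Set.range Set.Iic)
    with hCdef
  have hgen : MeasurableSpace.generateFrom C = (inferInstance : MeasurableSpace (ι → ℝ)) := by
    exact generateFrom_eq_pi (fun _ => (borel_eq_generateFrom_Iic ℝ).symm)
      (fun _ => ⟨fun n => Set.Iic (n : ℝ), fun n => ⟨n, rfl⟩, by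
        ext t
        simp only [Set.mem_iUnion, Set.mem_Iic, Set.mem_univ, iff_true]
        exact exists_nat_ge t⟩)
  have hpi : IsPiSystem C := by
    rintro s ⟨s0, hs0, rfl⟩ t ⟨t0, ht0, rfl⟩ -
    choose a ha using fun j => hs0 j (Set.mem_univ j)
    choose b hb using fun j => ht0 j (Set.mem_univ j)
    refine ⟨fun j => Set.Iic (min (a j) (b j)), fun j _ => ⟨_, rfl⟩, ?_⟩
    have hee : (fun j => s0 j ∩ t0 j) = fun j => Set.Iic (min (a j) (b j)) :=
      funext fun j => by rw [← ha j, ← hb j, Set.Iic_inter_Iic]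
    rw [← Set.pi_inter_distrib, hee]
  have hPQ : ν.pos.restrict W = ν.neg.restrict W := by
    haveI : IsFiniteMeasure (ν.pos.restrict W) := ⟨by
      rw [Measure.restrict_apply_univ]
      exact lt_of_le_of_lt (measure_mono hWsub) hp0.lt_top⟩
    refine ext_of_generate_finite C hgen.symm hpi ?_ ?_
    · rintro s ⟨s0, hs0, rfl⟩
      choose a ha using fun j => hs0 j (Set.mem_univ j)
      have hs0e : Set.univ.pi s0 = Set.univ.pi (fun j => Set.Iic (a j)) :=
        congrArg _ (funext fun j => (ha j).symm)
      have hsm : MeasurableSet (Set.univ.pi s0) := by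
        rw [hs0e]
        exact MeasurableSet.univ_pi fun j => measurableSet_Iic
      rw [Measure.restrict_apply hsm, Measure.restrict_apply hsm, hs0e]
      exact hkey a
    · rw [Measure.restrict_apply_univ, Measure.restrict_apply_univ]
      have hWy : Set.univ.pi (fun j => Set.Iic (y j)) ∩ W = W := by
        apply Set.inter_eq_self_of_subset_right
        intro z hz
        rw [Set.mem_univ_pi]
        intro j
        exact hz.1.2 j
      calc ν.pos W = ν.pos (Set.univ.pi (fun j => Set.Iic (y j)) ∩ W) := by rw [hWy]
        _ = ν.neg (Set.univ.pi (fun j => Set.Iic (y j)) ∩ W) := hkey y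
        _ = ν.neg W := by rw [hWy]
  obtain ⟨S, hSm, hS1, hS2⟩ := ν.singular
  have hposW : ν.pos W = 0 := by
    have h1 : ν.pos (W ∩ S) + ν.pos (W \ S) = ν.pos W := measure_inter_add_diff W hSm
    have h2 : ν.pos (W ∩ S) = 0 := measure_mono_null Set.inter_subset_right hS1
    have h3 : ν.pos (W \ S) = 0 := by
      have h4 : ν.pos.restrict W Sᶜ = ν.neg.restrict W Sᶜ := by rw [hPQ]
      rw [Measure.restrict_apply hSm.compl, Measure.restrict_apply hSm.compl] at h4
      have h5 : ν.neg (Sᶜ ∩ W) = 0 := measure_mono_null Set.inter_subset_left hS2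
      rw [Set.diff_eq, Set.inter_comm, h4]
      exact h5
    rw [← h1, h2, h3]
    simp
  have hnegW : ν.neg W = 0 := by
    have h4 : ν.neg W = ν.pos W := by
      have h5 := congrArg (fun μ : Measure (ι → ℝ) => μ Set.univ) hPQ
      simpa [Measure.restrict_apply_univ] using h5.symm
    rw [h4, hposW]
  exact ⟨hposW, hnegW⟩

end Aux6


/-- Proposition: signed measures of half-open boxes.
For `f ∈ F_mi(Ξ)` and a signed measure `ν` induced by `f`:
(i) if `f` is componentwise left-continuous then `ν([x,y)) = Δ_{x,y}[f]`;
(ii) if `f` is componentwise right-continuous then `ν((x,y]) = Δ_{x,y}[f]`;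
(iii) if `f` is continuous then `ν(B) = Δ_{x,y}[f]` for every box `B = ∏ B_i` with
`B_i ∈ {[x_i,y_i], (x_i,y_i], [x_i,y_i), (x_i,y_i)}`. -/
theorem stmt0 {ι : Type*} [Fintype ι] [DecidableEq ι] (Ξ : ι → Set ℝ)
    (hΞ : IsIntervalFamily Ξ) (f : (ι → ℝ) → ℝ) (hf : MemFmi Ξ f)
    (ν : SignedM (ι → ℝ)) (hν : Induces Ξ f ν) :
    (LeftCts Ξ f → ∀ x y : ι → ℝ, x ∈ piSet Ξ → y ∈ piSet Ξ → x ≤ y →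
      ν.val (boxIco x y) = ((delta f x y : ℝ) : EReal)) ∧
    (RightCts Ξ f → ∀ x y : ι → ℝ, x ∈ piSet Ξ → y ∈ piSet Ξ → x ≤ y →
      ν.val (boxIoc x y) = ((delta f x y : ℝ) : EReal)) ∧
    (ContinuousOn f (piSet Ξ) → ∀ x y : ι → ℝ, x ∈ piSet Ξ → y ∈ piSet Ξ → x ≤ y →
      ∀ B : ι → Set ℝ,
        (∀ i, B i = Set.Icc (x i) (y i) ∨ B i = Set.Ioc (x i) (y i) ∨
          B i = Set.Ico (x i) (y i) ∨ B i = Set.Ioo (x i) (y i)) →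
        ν.val (Set.univ.pi B) = ((delta f x y : ℝ) : EReal)) := by
  classical
  obtain ⟨hpos0, hneg0, hval⟩ := hν
  have part1 : LeftCts Ξ f → ∀ x y : ι → ℝ, x ∈ piSet Ξ → y ∈ piSet Ξ → x ≤ y →
      ν.val (boxIco x y) = ((delta f x y : ℝ) : EReal) := by
    intro hL x y hx hy hxy
    have hF : ∀ p : ι × Bool, (nhdsWithin (0:ℝ) (Set.Ioi 0)).NeBot := fun _ => inferInstance
    have hxJmem : ∀ J : Finset ι, (fun i => if i ∈ J then y i else x i) ∈ piSet Ξ := by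
      intro J
      rw [mem_piSet_iff]
      intro i
      by_cases hiJ : i ∈ J
      · simp only [if_pos hiJ]; exact mem_piSet_iff.1 hy i
      · simp only [if_neg hiJ]; exact mem_piSet_iff.1 hx i
    have hxJle : ∀ J : Finset ι, (fun i => if i ∈ J then y i else x i) ≤ y := by
      intro J i
      by_cases hiJ : i ∈ J <;> simp [hiJ, hxy i]
    have hex : ∀ J : Finset ι, ∃ r : ℝ,
        HasDLim Ξ f (fun i => if i ∈ J then y i else x i) y r ∧
        ν.val (Set.Icc (fun i => if i ∈ J then y i else x i) y) = (r : EReal) :=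
      fun J => hval _ _ (hxJmem J) hy (hxJle J)
    choose r hD hvalJ using hex
    have hsum : ∑ J ∈ (Finset.univ : Finset ι).powerset, (-1:ℝ)^J.card * r J
        = delta f x y := by
      have hIT : ∀ J ∈ (Finset.univ : Finset ι).powerset,
          IterLim (fun _ : ι × Bool => nhdsWithin (0:ℝ) (Set.Ioi 0)) (sideList ι true)
            (fun t => (-1:ℝ)^J.card * delta f (fun i => if i ∈ J then y i else x i)
              (upPt Ξ y (fun i => t (i, true)))) ((-1:ℝ)^J.card * r J) :=
        fun J _ => iterLim_const_mul _ (collapse_left hL (hxJmem J) hy (hD J))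
      have hsumIT := iterLim_sum hIT
      have hconst : IterLim (fun _ : ι × Bool => nhdsWithin (0:ℝ) (Set.Ioi 0)) (sideList ι true)
          (fun _ => delta f x y)
          (∑ J ∈ (Finset.univ : Finset ι).powerset, (-1:ℝ)^J.card * r J) :=
        iterLim_congr (fun t => key_alg_left f x y (upPt Ξ y (fun i => t (i, true)))) hsumIT
      exact iterLim_unique hF hconst (iterLim_const _)
    obtain ⟨r0, hD0, hval0⟩ := hval x y hx hy hxy
    obtain ⟨hp0, hq0, -⟩ := signedM_val_real hval0
    set piece : Finset ι → Set (ι → ℝ) := fun T =>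
      Set.univ.pi (fun i => if i ∈ T then ({y i} : Set ℝ) else Set.Ico (x i) (y i)) with hpiece
    have hpfin : ∀ T, ν.pos (piece T) ≠ ⊤ :=
      fun T => ne_top_of_le_ne_top hp0 (measure_mono (piece_subset_icc_left hxy T))
    have hqfin : ∀ T, ν.neg (piece T) ≠ ⊤ :=
      fun T => ne_top_of_le_ne_top hq0 (measure_mono (piece_subset_icc_left hxy T))
    have hdecomp : ∀ (μ : MeasureTheory.Measure (ι → ℝ)) (J : Finset ι),
        μ (Set.Icc (fun i => if i ∈ J then y i else x i) y)
        = ∑ T ∈ (Finset.univ : Finset ι).powerset.filter (fun T => J ⊆ T), μ (piece T) := by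
      intro μ J
      rw [icc_decomp_left hxy J]
      exact MeasureTheory.measure_biUnion_finset
        (piece_disj _ _ (disj_up x y) _) (fun T _ => piece_meas_left x y T)
    have hrJ : ∀ J : Finset ι, r J
        = ∑ T ∈ (Finset.univ : Finset ι).powerset.filter (fun T => J ⊆ T),
            ((ν.pos (piece T)).toReal - (ν.neg (piece T)).toReal) := by
      intro J
      obtain ⟨hpJ, hqJ, hrealJ⟩ := signedM_val_real (hvalJ J)
      rw [← hrealJ, hdecomp ν.pos J, hdecomp ν.neg J,
        ENNReal.toReal_sum (fun T _ => hpfin T), ENNReal.toReal_sum (fun T _ => hqfin T),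
        Finset.sum_sub_distrib]
    have hbox : ν.val (boxIco x y)
        = ((((ν.pos (piece ∅)).toReal - (ν.neg (piece ∅)).toReal : ℝ)) : EReal) := by
      have hb : boxIco x y = piece ∅ := boxIco_eq_piece x y
      rw [hb]
      exact signedM_val_eq (hpfin ∅) (hqfin ∅)
    rw [hbox]
    have h2 : ∑ J ∈ (Finset.univ : Finset ι).powerset, (-1:ℝ)^J.card * r J
        = (ν.pos (piece ∅)).toReal - (ν.neg (piece ∅)).toReal := by
      rw [Finset.sum_congr rfl (fun J _ => by rw [hrJ J])]
      exact comb_sum (fun T => (ν.pos (piece T)).toReal - (ν.neg (piece T)).toReal)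
    have h3 : (ν.pos (piece ∅)).toReal - (ν.neg (piece ∅)).toReal = delta f x y :=
      h2.symm.trans hsum
    rw [h3]
  have part2 : RightCts Ξ f → ∀ x y : ι → ℝ, x ∈ piSet Ξ → y ∈ piSet Ξ → x ≤ y →
      ν.val (boxIoc x y) = ((delta f x y : ℝ) : EReal) := by
    intro hR x y hx hy hxy
    have hF : ∀ p : ι × Bool, (nhdsWithin (0:ℝ) (Set.Ioi 0)).NeBot := fun _ => inferInstance
    have hyJmem : ∀ J : Finset ι, (fun i => if i ∈ J then x i else y i) ∈ piSet Ξ := by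
      intro J
      rw [mem_piSet_iff]
      intro i
      by_cases hiJ : i ∈ J
      · simp only [if_pos hiJ]; exact mem_piSet_iff.1 hx i
      · simp only [if_neg hiJ]; exact mem_piSet_iff.1 hy i
    have hyJle : ∀ J : Finset ι, x ≤ (fun i => if i ∈ J then x i else y i) := by
      intro J i
      by_cases hiJ : i ∈ J <;> simp [hiJ, hxy i]
    have hex : ∀ J : Finset ι, ∃ r : ℝ,
        HasDLim Ξ f x (fun i => if i ∈ J then x i else y i) r ∧
        ν.val (Set.Icc x (fun i => if i ∈ J then x i else y i)) = (r : EReal) :=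
      fun J => hval _ _ hx (hyJmem J) (hyJle J)
    choose r hD hvalJ using hex
    have hsum : ∑ J ∈ (Finset.univ : Finset ι).powerset, (-1:ℝ)^J.card * r J
        = delta f x y := by
      have hIT : ∀ J ∈ (Finset.univ : Finset ι).powerset,
          IterLim (fun _ : ι × Bool => nhdsWithin (0:ℝ) (Set.Ioi 0)) (sideList ι false)
            (fun t => (-1:ℝ)^J.card * delta f (lowPt Ξ x (fun i => t (i, false)))
              (fun i => if i ∈ J then x i else y i)) ((-1:ℝ)^J.card * r J) :=
        fun J _ => iterLim_const_mul _ (collapse_right hR hx (hyJmem J) (hD J))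
      have hsumIT := iterLim_sum hIT
      have hconst : IterLim (fun _ : ι × Bool => nhdsWithin (0:ℝ) (Set.Ioi 0)) (sideList ι false)
          (fun _ => delta f x y)
          (∑ J ∈ (Finset.univ : Finset ι).powerset, (-1:ℝ)^J.card * r J) :=
        iterLim_congr (fun t => key_alg_right f x y (lowPt Ξ x (fun i => t (i, false)))) hsumIT
      exact iterLim_unique hF hconst (iterLim_const _)
    obtain ⟨r0, hD0, hval0⟩ := hval x y hx hy hxy
    obtain ⟨hp0, hq0, -⟩ := signedM_val_real hval0
    set piece : Finset ι → Set (ι → ℝ) := fun T =>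
      Set.univ.pi (fun i => if i ∈ T then ({x i} : Set ℝ) else Set.Ioc (x i) (y i)) with hpiece
    have hpfin : ∀ T, ν.pos (piece T) ≠ ⊤ :=
      fun T => ne_top_of_le_ne_top hp0 (measure_mono (piece_subset_icc_right hxy T))
    have hqfin : ∀ T, ν.neg (piece T) ≠ ⊤ :=
      fun T => ne_top_of_le_ne_top hq0 (measure_mono (piece_subset_icc_right hxy T))
    have hdecomp : ∀ (μ : MeasureTheory.Measure (ι → ℝ)) (J : Finset ι),
        μ (Set.Icc x (fun i => if i ∈ J then x i else y i))
        = ∑ T ∈ (Finset.univ : Finset ι).powerset.filter (fun T => J ⊆ T), μ (piece T) := by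
      intro μ J
      rw [icc_decomp_right hxy J]
      exact MeasureTheory.measure_biUnion_finset
        (piece_disj _ _ (disj_lo x y) _) (fun T _ => piece_meas_right x y T)
    have hrJ : ∀ J : Finset ι, r J
        = ∑ T ∈ (Finset.univ : Finset ι).powerset.filter (fun T => J ⊆ T),
            ((ν.pos (piece T)).toReal - (ν.neg (piece T)).toReal) := by
      intro J
      obtain ⟨hpJ, hqJ, hrealJ⟩ := signedM_val_real (hvalJ J)
      rw [← hrealJ, hdecomp ν.pos J, hdecomp ν.neg J,
        ENNReal.toReal_sum (fun T _ => hpfin T), ENNReal.toReal_sum (fun T _ => hqfin T),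
        Finset.sum_sub_distrib]
    have hbox : ν.val (boxIoc x y)
        = ((((ν.pos (piece ∅)).toReal - (ν.neg (piece ∅)).toReal : ℝ)) : EReal) := by
      have hb : boxIoc x y = piece ∅ := boxIoc_eq_piece x y
      rw [hb]
      exact signedM_val_eq (hpfin ∅) (hqfin ∅)
    rw [hbox]
    have h2 : ∑ J ∈ (Finset.univ : Finset ι).powerset, (-1:ℝ)^J.card * r J
        = (ν.pos (piece ∅)).toReal - (ν.neg (piece ∅)).toReal := by
      rw [Finset.sum_congr rfl (fun J _ => by rw [hrJ J])]
      exact comb_sum (fun T => (ν.pos (piece T)).toReal - (ν.neg (piece T)).toReal)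
    have h3 : (ν.pos (piece ∅)).toReal - (ν.neg (piece ∅)).toReal = delta f x y :=
      h2.symm.trans hsum
    rw [h3]
  refine ⟨part1, part2, ?_⟩
  intro hC x y hx hy hxy B hB
  have hL := leftCts_of_continuousOn hC
  have hR := rightCts_of_continuousOn hC
  have hzero : ∀ u v : ι → ℝ, u ∈ piSet Ξ → v ∈ piSet Ξ → u ≤ v → (∃ i0, u i0 = v i0) →
      ν.val (Set.Icc u v) = ((0:ℝ) : EReal) := by
    rintro u v hu hv huv ⟨i0, hdeg⟩
    obtain ⟨r, hD, hvr⟩ := hval u v hu hv huv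
    rw [hvr, dlim_eq_delta hL hR hu hv hD, delta_degenerate f hdeg]
  obtain ⟨r0, hD0, hval0⟩ := hval x y hx hy hxy
  obtain ⟨hp0, hq0, -⟩ := signedM_val_real hval0
  have hslabx : ∀ i : ι, ν.pos (Set.Icc x y ∩ {z | z i = x i}) = 0 ∧
      ν.neg (Set.Icc x y ∩ {z | z i = x i}) = 0 :=
    fun i => slab_null hΞ hzero hx hy hxy hp0 hq0 i (mem_piSet_iff.1 hx i) le_rfl (hxy i)
  have hslaby : ∀ i : ι, ν.pos (Set.Icc x y ∩ {z | z i = y i}) = 0 ∧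
      ν.neg (Set.Icc x y ∩ {z | z i = y i}) = 0 :=
    fun i => slab_null hΞ hzero hx hy hxy hp0 hq0 i (mem_piSet_iff.1 hy i) (hxy i) le_rfl
  set N : Set (ι → ℝ) := ⋃ i : ι,
    ((Set.Icc x y ∩ {z | z i = x i}) ∪ (Set.Icc x y ∩ {z | z i = y i})) with hN
  have hNpos : ν.pos N = 0 :=
    MeasureTheory.measure_iUnion_null fun i =>
      MeasureTheory.measure_union_null (hslabx i).1 (hslaby i).1
  have hNneg : ν.neg N = 0 :=
    MeasureTheory.measure_iUnion_null fun i =>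
      MeasureTheory.measure_union_null (hslabx i).2 (hslaby i).2
  have hBsub : ∀ i, B i ⊆ Set.Icc (x i) (y i) := by
    intro i
    rcases hB i with h | h | h | h <;> rw [h]
    · exact Set.Ioc_subset_Icc_self
    · exact Set.Ico_subset_Icc_self
    · exact Set.Ioo_subset_Icc_self
  have hBsup : ∀ i, Set.Ioo (x i) (y i) ⊆ B i := by
    intro i
    rcases hB i with h | h | h | h <;> rw [h]
    · exact Set.Ioo_subset_Icc_self
    · exact Set.Ioo_subset_Ioc_self
    · exact Set.Ioo_subset_Ico_self
  have hsub1 : Set.univ.pi B \ boxIco x y ⊆ N := by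
    rintro z ⟨hzB, hznot⟩
    rw [Set.mem_univ_pi] at hzB
    have hzIcc : z ∈ Set.Icc x y := by
      constructor
      · intro i; exact (Set.mem_Icc.1 (hBsub i (hzB i))).1
      · intro i; exact (Set.mem_Icc.1 (hBsub i (hzB i))).2
    have : ¬ ∀ i, z i ∈ Set.Ico (x i) (y i) := hznot
    push_neg at this
    obtain ⟨i, hi⟩ := this
    have h1 : x i ≤ z i := (Set.mem_Icc.1 (hBsub i (hzB i))).1
    have h2 : z i ≤ y i := (Set.mem_Icc.1 (hBsub i (hzB i))).2
    have h3 : z i = y i := by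
      by_contra h4
      exact hi (Set.mem_Ico.2 ⟨h1, lt_of_le_of_ne h2 h4⟩)
    exact Set.mem_iUnion.2 ⟨i, Or.inr ⟨hzIcc, h3⟩⟩
  have hsub2 : boxIco x y \ Set.univ.pi B ⊆ N := by
    rintro z ⟨hzbox, hznot⟩
    have hzIco : ∀ i, z i ∈ Set.Ico (x i) (y i) := hzbox
    have hzIcc : z ∈ Set.Icc x y := by
      constructor
      · intro i; exact (Set.mem_Ico.1 (hzIco i)).1
      · intro i; exact le_of_lt (Set.mem_Ico.1 (hzIco i)).2
    rw [Set.mem_univ_pi] at hznot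
    push_neg at hznot
    obtain ⟨i, hi⟩ := hznot
    have h3 : z i = x i := by
      by_contra h4
      exact hi (hBsup i (Set.mem_Ioo.2
        ⟨lt_of_le_of_ne (Set.mem_Ico.1 (hzIco i)).1 (Ne.symm h4), (Set.mem_Ico.1 (hzIco i)).2⟩))
    exact Set.mem_iUnion.2 ⟨i, Or.inl ⟨hzIcc, h3⟩⟩
  have haep : Set.univ.pi B =ᶠ[MeasureTheory.ae ν.pos] boxIco x y :=
    (MeasureTheory.ae_eq_set).2
      ⟨MeasureTheory.measure_mono_null hsub1 hNpos, MeasureTheory.measure_mono_null hsub2 hNpos⟩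
  have haen : Set.univ.pi B =ᶠ[MeasureTheory.ae ν.neg] boxIco x y :=
    (MeasureTheory.ae_eq_set).2
      ⟨MeasureTheory.measure_mono_null hsub1 hNneg, MeasureTheory.measure_mono_null hsub2 hNneg⟩
  have hval_eq : ν.val (Set.univ.pi B) = ν.val (boxIco x y) := by
    unfold SignedM.val
    rw [MeasureTheory.measure_congr haep, MeasureTheory.measure_congr haen]
  rw [hval_eq]
  exact part1 hL x y hx hy hxy

end MIF
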